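/- arXiv:1810.03898 — 12 statements merged into one kernel-verified Lean document; each statement's English description precedes it below -/
import Mathlib

section
/- If a, b, c, d are coprime integers (gcd(a,b,c,d)=1), then there exist integers α, β, γ, δ such that aα + bβ + cγ + dδ = 1 and αδ = βγ. -/
-- Finishing step: a coprime "rank-1 direction" gives the full solution.
lemma finish_step (a b c d X Y : ℤ) (h : IsCoprime (X*a + Y*c) (X*b + Y*d)) :
    ∃ α β γ δ : ℤ, a * α + b * β + c * γ + d * δ = 1 ∧ α * δ = β * γ := by
  obtain ⟨P, Q, hPQ⟩ := h
  exact ⟨X*P, X*Q, Y*P, Y*Q, by linear_combination hPQ, by ring⟩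

-- Key lifting lemma.
lemma key (g w n : ℤ) (hn : n ≠ 0) (h : Int.gcd (Int.gcd g w) n = 1) :
    ∃ x : ℤ, Int.gcd (g * x + w) n = 1 := by
  classical
  set S : Finset ℕ := n.natAbs.primeFactors.filter (fun p => ¬ (p ∣ w.natAbs)) with hS
  refine ⟨(↑(∏ p ∈ S, p) : ℤ), ?_⟩
  set x : ℤ := (↑(∏ p ∈ S, p) : ℤ) with hx
  rw [Int.gcd]
  by_contra hcon
  obtain ⟨p, hp, hpm, hpn⟩ := Nat.Prime.not_coprime_iff_dvd.mp hcon
  have hpmZ : (p:ℤ) ∣ g * x + w := Int.dvd_natAbs.mp (Int.natCast_dvd_natCast.mpr hpm)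
  have hpnZ : (p:ℤ) ∣ n := Int.dvd_natAbs.mp (Int.natCast_dvd_natCast.mpr hpn)
  by_cases hpw : p ∣ w.natAbs
  · -- p divides w, hence p does not divide g nor x
    have hpwZ : (p:ℤ) ∣ w := Int.dvd_natAbs.mp (Int.natCast_dvd_natCast.mpr hpw)
    have hpg : ¬ p ∣ g.natAbs := by
      intro hpg
      have h1 : p ∣ Int.gcd g w := Nat.dvd_gcd hpg hpw
      have h2 : p ∣ Int.gcd (↑(Int.gcd g w)) n := by
        apply Nat.dvd_gcd
        · simpa using h1
        · exact hpn
      rw [h] at h2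
      exact hp.one_lt.ne' (Nat.dvd_one.mp h2)
    have hpx : ¬ (p:ℤ) ∣ x := by
      intro hdvd
      have : p ∣ ∏ q ∈ S, q := by
        rw [hx] at hdvd; exact_mod_cast hdvd
      obtain ⟨q, hqS, hpq⟩ := hp.prime.exists_mem_finset_dvd this
      rw [hS, Finset.mem_filter] at hqS
      have hq : q.Prime := Nat.prime_of_mem_primeFactors hqS.1
      have : p = q := (Nat.prime_dvd_prime_iff_eq hp hq).mp hpq
      exact hqS.2 (this ▸ hpw)
    have hgx : (p:ℤ) ∣ g * x := by
      have : (p:ℤ) ∣ (g*x + w) - w := hpmZ.sub hpwZ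
      simpa using this
    rcases (Nat.prime_iff_prime_int.1 hp).2.2 g x hgx with h' | h'
    · exact hpg (Int.natCast_dvd_natCast.mp (Int.dvd_natAbs.mpr h'))
    · exact hpx h'
  · -- p does not divide w, hence p ∈ S so p ∣ x, contradiction
    have hpS : p ∈ S := by
      rw [hS, Finset.mem_filter]
      refine ⟨Nat.mem_primeFactors.mpr ⟨hp, hpn, Int.natAbs_ne_zero.mpr hn⟩, hpw⟩
    have hpx : (p:ℤ) ∣ x := by
      have : p ∣ ∏ q ∈ S, q := Finset.dvd_prod_of_mem (fun q => q) hpS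
      rw [hx]; exact_mod_cast this
    have hpwZ : (p:ℤ) ∣ w := by
      have : (p:ℤ) ∣ (g*x + w) - g*x := hpmZ.sub (Dvd.dvd.mul_left hpx g)
      simpa using this
    exact hpw (Int.natCast_dvd_natCast.mp (Int.dvd_natAbs.mpr hpwZ))

theorem stmt_0 (a b c d : ℤ) (h : Int.gcd (Int.gcd (Int.gcd a b) c) d = 1) :
    ∃ α β γ δ : ℤ, a * α + b * β + c * γ + d * δ = 1 ∧ α * δ = β * γ := by
  by_cases hG : Int.gcd a b = 0
  · -- a = b = 0, so gcd c d = 1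
    obtain ⟨ha0, hb0⟩ := Int.gcd_eq_zero_iff.mp hG
    have hcd : Int.gcd c d = 1 := by
      simpa [ha0, hb0, Int.gcd, Int.natAbs_abs] using h
    have : IsCoprime c d := Int.isCoprime_iff_gcd_eq_one.mpr hcd
    have : IsCoprime (0*a + 1*c) (0*b + 1*d) := by simpa using this
    exact finish_step a b c d 0 1 this
  · set G : ℤ := (Int.gcd a b : ℤ) with hGdef
    have hG0 : G ≠ 0 := by
      rw [hGdef]; exact_mod_cast hG
    obtain ⟨a', haa⟩ : G ∣ a := Int.gcd_dvd_left a b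
    obtain ⟨b', hbb⟩ : G ∣ b := Int.gcd_dvd_right a b
    set u : ℤ := Int.gcdA a b with hu
    set v : ℤ := Int.gcdB a b with hv
    have huv : a * u + b * v = G := (Int.gcd_eq_gcd_ab a b).symm
    have huv' : a' * u + b' * v = 1 := by
      have : G * (a' * u + b' * v) = G * 1 := by
        linear_combination huv - u * haa - v * hbb
      exact mul_left_cancel₀ hG0 this
    set w : ℤ := c * u + d * v with hw
    set Δ : ℤ := d * a' - c * b' with hΔ
    have hc : c = a' * w - v * Δ := by
      rw [hw, hΔ]; linear_combination c * huv'.symm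
    have hd : d = b' * w + u * Δ := by
      rw [hw, hΔ]; linear_combination d * huv'.symm
    -- gcd (gcd G w) Δ = 1
    have hkey : Int.gcd (Int.gcd G w) Δ = 1 := by
      set K : ℕ := Int.gcd (Int.gcd G w) Δ with hK
      have hK1 : (K:ℤ) ∣ (Int.gcd G w : ℤ) := Int.gcd_dvd_left _ _
      have hKΔ : (K:ℤ) ∣ Δ := Int.gcd_dvd_right _ _
      have hKG : (K:ℤ) ∣ G := hK1.trans (Int.gcd_dvd_left _ _)
      have hKw : (K:ℤ) ∣ w := hK1.trans (Int.gcd_dvd_right _ _)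
      have hKa : (K:ℤ) ∣ a := haa ▸ hKG.mul_right a'
      have hKb : (K:ℤ) ∣ b := hbb ▸ hKG.mul_right b'
      have hKc : (K:ℤ) ∣ c := hc ▸ dvd_sub (hKw.mul_left a') (hKΔ.mul_left v)
      have hKd : (K:ℤ) ∣ d := hd ▸ dvd_add (hKw.mul_left b') (hKΔ.mul_left u)
      have h1 : (K:ℤ) ∣ (Int.gcd (Int.gcd (Int.gcd a b) c) d : ℤ) :=
        Int.dvd_coe_gcd (Int.dvd_coe_gcd (Int.dvd_coe_gcd hKa hKb) hKc) hKd
      rw [h] at h1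
      exact Nat.dvd_one.mp (by exact_mod_cast h1)
    by_cases hΔ0 : Δ = 0
    · have hGw : Int.gcd G w = 1 := by
        have := hkey
        rw [hΔ0] at this
        simpa [Int.gcd] using this
      obtain ⟨p, q, hpq⟩ := Int.isCoprime_iff_gcd_eq_one.mpr hGw
      refine finish_step a b c d p q ⟨u, v, ?_⟩
      rw [hw] at hpq
      linear_combination hpq + p * huv
    · obtain ⟨x, hx⟩ := key G w Δ hΔ0 hkey
      obtain ⟨s, t, hst⟩ := Int.isCoprime_iff_gcd_eq_one.mpr hx
      refine finish_step a b c d x 1 ⟨s*u - t*b', s*v + t*a', ?_⟩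
      rw [hw, hΔ] at hst
      linear_combination hst + s*x*huv + t*x*a'*hbb - t*x*b'*haa
end

section
/- Let R be a commutative ring and B = [[a,c],[b,d]] a 2×2 matrix over R whose entries generate the unit ideal. If there exists a 2×2 matrix C over R with det(C) = 0 such that the entries of BC generate the unit ideal, then there exists a 2×2 matrix C₀ over R with det(C₀) = 0 and Tr(BC₀) = 1. -/
/-- The content of a matrix: the ideal generated by its entries. -/
def matrixContent {R : Type*} [CommRing R] {n m : Type*}
    (M : Matrix n m R) : Ideal R :=
  Ideal.span {r : R | ∃ i j, M i j = r}

theorem stmt_3 {R : Type*} [CommRing R]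
    (B : Matrix (Fin 2) (Fin 2) R)
    (hB : matrixContent B = ⊤)
    (hC : ∃ C : Matrix (Fin 2) (Fin 2) R, C.det = 0 ∧ matrixContent (B * C) = ⊤) :
    ∃ C₀ : Matrix (Fin 2) (Fin 2) R, C₀.det = 0 ∧ (B * C₀).trace = 1 := by
  obtain ⟨C, hCdet, hcont⟩ := hC
  set A := B * C with hA
  have h1 : (1 : R) ∈ matrixContent A := hcont ▸ Submodule.mem_top
  have hset : {r : R | ∃ i j, A i j = r}
      = Set.range (fun p : Fin 2 × Fin 2 => A p.1 p.2) := by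
    ext r
    constructor
    · rintro ⟨i, j, h⟩; exact ⟨(i, j), h⟩
    · rintro ⟨⟨i, j⟩, h⟩; exact ⟨i, j, h⟩
  rw [matrixContent, hset] at h1
  rw [Ideal.span, Submodule.mem_span_range_iff_exists_fun] at h1
  obtain ⟨c, hc⟩ := h1
  refine ⟨C * Matrix.of (fun j i => c (i, j)), by rw [Matrix.det_mul, hCdet, zero_mul], ?_⟩
  rw [← Matrix.mul_assoc, ← hA, ← hc, Fintype.sum_prod_type]
  simp only [Matrix.trace, Matrix.diag, Matrix.mul_apply, Matrix.of_apply, smul_eq_mul]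
  exact Finset.sum_congr rfl fun i _ => Finset.sum_congr rfl fun j _ => mul_comm _ _
end

section
/- Let V be a rank-one valuation domain with valuation v and E ⊆ V. If E contains no pseudo-divergent sequence (i.e., no sequence with v(x_n − x_m) < v(x_m − x_l) for all l < m < n), then E admits a v-ordering: a sequence {a_n} in E such that for all n ≥ 1, v(∏_{k<n}(a_n − a_k)) = inf_{x∈E} v(∏_{k<n}(x − a_k)), and in particular this infimum is attained. -/
open Finset

section Aux

variable {α : Type*} [LinearOrder α]

private lemma my_dichotomy (s : ℕ → α) :
    (∃ φ : ℕ → ℕ, StrictMono φ ∧ StrictAnti (s ∘ φ)) ∨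
    (∃ φ : ℕ → ℕ, StrictMono φ ∧ Monotone (s ∘ φ)) := by
  by_cases hP : {i : ℕ | ∀ j, i < j → s j < s i}.Infinite
  · left
    refine ⟨Nat.nth (fun i => ∀ j, i < j → s j < s i), Nat.nth_strictMono hP, ?_⟩
    intro i j hij
    have h1 := Nat.nth_mem_of_infinite (p := fun i => ∀ j, i < j → s j < s i) hP i
    exact h1 _ ((Nat.nth_strictMono hP) hij)
  · right
    rw [Set.not_infinite] at hP
    obtain ⟨N, hN⟩ := hP.bddAbove
    have key : ∀ i, N < i → ∃ j, i < j ∧ s i ≤ s j := by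
      intro i hi
      have hmem : i ∉ {i : ℕ | ∀ j, i < j → s j < s i} := fun h => absurd (hN h) (not_le.2 hi)
      simp only [Set.mem_setOf_eq, not_forall, not_lt] at hmem
      obtain ⟨j, hj1, hj2⟩ := hmem
      exact ⟨j, hj1, hj2⟩
    let f : ℕ → {i : ℕ // N < i} := fun n => Nat.rec ⟨N + 1, Nat.lt_succ_self N⟩
      (fun _ p => ⟨(key p.1 p.2).choose, lt_trans p.2 (key p.1 p.2).choose_spec.1⟩) n
    have hf : ∀ n, (f n).1 < (f (n + 1)).1 ∧ s (f n).1 ≤ s (f (n + 1)).1 := fun n =>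
      ⟨(key (f n).1 (f n).2).choose_spec.1, (key (f n).1 (f n).2).choose_spec.2⟩
    exact ⟨fun n => (f n).1, strictMono_nat_of_lt_succ (fun n => (hf n).1),
      monotone_nat_of_le_succ (fun n => (hf n).2)⟩

private lemma my_pick : ∀ (n : ℕ) (d : ℕ → ℕ → WithTop ℝ),
    StrictAnti (fun j => ∑ k ∈ range n, d k j) →
    ∃ k < n, ∃ φ : ℕ → ℕ, StrictMono φ ∧ StrictAnti fun j => d k (φ j) := by
  intro n
  induction n with
  | zero =>
    intro d hd
    exact absurd (hd Nat.zero_lt_one) (by simp)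
  | succ n ih =>
    intro d hd
    rcases my_dichotomy (fun j => d n j) with ⟨φ, hφ, hanti⟩ | ⟨φ, hφ, hmono⟩
    · exact ⟨n, Nat.lt_succ_self n, φ, hφ, hanti⟩
    · have h2 : StrictAnti (fun j => ∑ k ∈ range n, d k (φ j)) := by
        intro i j hij
        have hs : (∑ k ∈ range (n + 1), d k (φ j)) < ∑ k ∈ range (n + 1), d k (φ i) :=
          hd (hφ hij)
        rw [Finset.sum_range_succ, Finset.sum_range_succ] at hs
        have hb : d n (φ i) ≤ d n (φ j) := hmono hij.le
        by_contra hcon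
        push_neg at hcon
        exact absurd (add_le_add hcon hb) (not_le.2 hs)
      obtain ⟨k, hk, ψ, hψ, hanti⟩ := ih (fun k j => d k (φ j)) h2
      exact ⟨k, hk.trans (Nat.lt_succ_self n), φ ∘ ψ, hφ.comp hψ, fun i j hij => hanti hij⟩

private lemma my_val_prod {V : Type*} [CommRing V] (v : AddValuation V (WithTop ℝ))
    (s : Finset ℕ) (f : ℕ → V) : v (∏ k ∈ s, f k) = ∑ k ∈ s, v (f k) := by
  induction s using Finset.cons_induction with
  | empty => simp [v.map_one]
  | cons a s ha ih => rw [Finset.prod_cons, Finset.sum_cons, v.map_mul, ih]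

private lemma my_key {V : Type*} [CommRing V] [IsDomain V] [ValuationRing V]
    (v : AddValuation V (WithTop ℝ)) (E : Set V) (hE : E.Nonempty)
    (hnd : ¬ ∃ x : ℕ → V, (∀ n, x n ∈ E) ∧
      ∀ l m n : ℕ, l < m → m < n → v (x n - x m) < v (x m - x l))
    (n : ℕ) (c : ℕ → V) :
    ∃ a, a ∈ E ∧ ∀ x ∈ E,
      v (∏ k ∈ range n, (a - c k)) ≤ v (∏ k ∈ range n, (x - c k)) := by
  by_contra hcon
  push_neg at hcon
  have step : ∀ y : {z : V // z ∈ E}, ∃ z : {z : V // z ∈ E},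
      v (∏ k ∈ range n, (z.1 - c k)) < v (∏ k ∈ range n, (y.1 - c k)) := by
    rintro ⟨y, hy⟩
    obtain ⟨x, hx, hlt⟩ := hcon y hy
    exact ⟨⟨x, hx⟩, hlt⟩
  let u : ℕ → {z : V // z ∈ E} := fun j => Nat.rec ⟨hE.choose, hE.choose_spec⟩
    (fun _ p => (step p).choose) j
  have hu : StrictAnti (fun j => v (∏ k ∈ range n, ((u j).1 - c k))) :=
    strictAnti_nat_of_succ_lt fun j => (step (u j)).choose_spec
  have hu' : StrictAnti (fun j => ∑ k ∈ range n, v ((u j).1 - c k)) := by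
    have : (fun j => ∑ k ∈ range n, v ((u j).1 - c k)) =
        (fun j => v (∏ k ∈ range n, ((u j).1 - c k))) := by
      funext j
      rw [my_val_prod]
    rw [this]
    exact hu
  obtain ⟨k, hk, φ, hφ, hanti⟩ := my_pick n (fun k j => v ((u j).1 - c k)) hu'
  apply hnd
  refine ⟨fun j => (u (φ j)).1, fun j => (u (φ j)).2, ?_⟩
  intro l m n' hlm hmn
  have h1 : v ((u (φ n')).1 - c k) < v ((u (φ m)).1 - c k) := hanti hmn
  have h2 : v ((u (φ m)).1 - c k) < v ((u (φ l)).1 - c k) := hanti hlm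
  have e1 : (u (φ n')).1 - (u (φ m)).1 = ((u (φ n')).1 - c k) - ((u (φ m)).1 - c k) := by ring
  have e2 : (u (φ m)).1 - (u (φ l)).1 = ((u (φ m)).1 - c k) - ((u (φ l)).1 - c k) := by ring
  rw [e1, e2, AddValuation.map_sub_eq_of_lt_left v h1, AddValuation.map_sub_eq_of_lt_left v h2]
  exact h1

end Aux

theorem stmt_9 {V : Type*} [CommRing V] [IsDomain V] [ValuationRing V]
    (v : AddValuation V (WithTop ℝ)) (E : Set V) (hE : E.Nonempty)
    (hnd : ¬ ∃ x : ℕ → V, (∀ n, x n ∈ E) ∧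
      ∀ l m n : ℕ, l < m → m < n → v (x n - x m) < v (x m - x l)) :
    ∃ a : ℕ → V, (∀ n, a n ∈ E) ∧
      ∀ n : ℕ, 1 ≤ n → ∀ x ∈ E,
        v (∏ k ∈ Finset.range n, (a n - a k)) ≤
          v (∏ k ∈ Finset.range n, (x - a k)) := by
  obtain ⟨e0, he0⟩ := hE
  choose step hstepE hstepmin using my_key v E ⟨e0, he0⟩ hnd
  let g : ℕ → ℕ → V := fun n => Nat.rec (fun _ => e0)
    (fun n gn => fun k => if k = n + 1 then step (n + 1) gn else gn k) n
  have hg_succ : ∀ n k, g (n + 1) k = if k = n + 1 then step (n + 1) (g n) else g n k :=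
    fun n k => rfl
  have agree : ∀ k n, k ≤ n → g n k = g k k := by
    intro k n
    induction n with
    | zero => intro h; rw [Nat.le_zero.mp h]
    | succ n ih =>
      intro h
      rcases Nat.lt_succ_iff_lt_or_eq.mp (Nat.lt_succ_of_le h) with h' | h'
      · rw [hg_succ, if_neg (by omega), ih (by omega)]
      · rw [h']
  refine ⟨fun n => g n n, ?_, ?_⟩
  · intro n
    cases n with
    | zero => exact he0
    | succ m =>
      show g (m + 1) (m + 1) ∈ E
      have : g (m + 1) (m + 1) = step (m + 1) (g m) := by rw [hg_succ, if_pos rfl]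
      rw [this]
      exact hstepE (m + 1) (g m)
  · intro n hn x hx
    cases n with
    | zero => omega
    | succ m =>
      have ha : g (m + 1) (m + 1) = step (m + 1) (g m) := by rw [hg_succ, if_pos rfl]
      have hprod : ∀ y : V, (∏ k ∈ Finset.range (m + 1), (y - g k k)) =
          ∏ k ∈ Finset.range (m + 1), (y - g m k) := by
        intro y
        refine Finset.prod_congr rfl fun k hk => ?_
        rw [agree k m (by simpa [Nat.lt_succ_iff] using hk)]
      show v (∏ k ∈ Finset.range (m + 1), (g (m + 1) (m + 1) - g k k)) ≤
        v (∏ k ∈ Finset.range (m + 1), (x - g k k))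
      rw [ha, hprod, hprod]
      exact hstepmin (m + 1) (g m) x hx
end

section
/- Let V be a rank-one valuation domain with valuation v, E an infinite subset of V, and h(X) = ∏_{k=0}^{n−1}(X − a_k) with a_k ∈ V. If the infimum inf_{x∈E} v(h(x)) is not attained, then E contains an infinite sequence {x_m} and an index k < n such that v(x_m − a_k) is strictly decreasing in m; in particular E contains a pseudo-divergent sequence if no such strictly decreasing subsequence exists among the other factors. -/
open Classical in
private lemma exists_mono_or_anti {α : Type*} [LinearOrder α] (g : ℕ → α) :
    ∃ φ : ℕ → ℕ, StrictMono φ ∧ (Monotone (g ∘ φ) ∨ Antitone (g ∘ φ)) := by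
  by_cases h : {m | ∀ n, m < n → g n ≤ g m}.Infinite
  · refine ⟨Nat.nth (· ∈ {m | ∀ n, m < n → g n ≤ g m}), Nat.nth_strictMono h, Or.inr ?_⟩
    refine antitone_nat_of_succ_le fun i => ?_
    exact (Nat.nth_mem_of_infinite h i) _ ((Nat.nth_strictMono h) (Nat.lt_succ_self i))
  · rw [Set.not_infinite] at h
    obtain ⟨N, hN⟩ := h.bddAbove
    have key : ∀ m, N < m → ∃ n, m < n ∧ g m < g n := by
      intro m hm
      by_contra hcon
      push_neg at hcon
      have : m ∈ {m | ∀ n, m < n → g n ≤ g m} := fun n hn => hcon n hn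
      exact absurd (hN this) (not_le.mpr hm)
    choose F hF1 hF2 using key
    let φ : ℕ → {m : ℕ // N < m} := fun i =>
      Nat.rec ⟨N + 1, Nat.lt_succ_self N⟩
        (fun _ p => ⟨F p.1 p.2, p.2.trans (hF1 p.1 p.2)⟩) i
    have hstep : ∀ i, (φ i).1 < (φ (i + 1)).1 := fun i => hF1 _ _
    have hgstep : ∀ i, g (φ i).1 < g (φ (i + 1)).1 := fun i => hF2 _ _
    refine ⟨fun i => (φ i).1, strictMono_nat_of_lt_succ hstep, Or.inl ?_⟩
    exact monotone_nat_of_le_succ fun i => (hgstep i).le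

private lemma exists_mono_or_anti_multi {α : Type*} [LinearOrder α] (n : ℕ)
    (f : ℕ → Fin n → α) :
    ∃ φ : ℕ → ℕ, StrictMono φ ∧ ∀ k : Fin n,
      Monotone (fun m => f (φ m) k) ∨ Antitone (fun m => f (φ m) k) := by
  induction n with
  | zero => exact ⟨id, strictMono_id, fun k => k.elim0⟩
  | succ n ih =>
    obtain ⟨φ, hφ, hmono⟩ := ih (fun m k => f m k.castSucc)
    obtain ⟨ψ, hψ, hlast⟩ := exists_mono_or_anti (fun m => f (φ m) (Fin.last n))
    refine ⟨φ ∘ ψ, hφ.comp hψ, fun k => ?_⟩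
    refine Fin.lastCases ?_ (fun i => ?_) k
    · exact hlast
    · rcases hmono i with h | h
      · exact Or.inl (h.comp hψ.monotone)
      · exact Or.inr (h.comp_monotone hψ.monotone)

private lemma addval_prod {V : Type*} [CommRing V] {ι : Type*}
    (v : AddValuation V (WithTop ℝ)) (s : Finset ι) (f : ι → V) :
    v (∏ i ∈ s, f i) = ∑ i ∈ s, v (f i) := by
  classical
  induction s using Finset.cons_induction with
  | empty => simp [v.map_one]
  | cons a s ha ih => rw [Finset.prod_cons, Finset.sum_cons, v.map_mul, ih]

theorem stmt_10 {V : Type*} [CommRing V] [IsDomain V] [ValuationRing V]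
    (v : AddValuation V (WithTop ℝ)) (E : Set V) (hE : E.Infinite)
    (n : ℕ) (a : Fin n → V)
    (hnotatt : ¬ ∃ y ∈ E, ∀ x ∈ E,
      v (∏ k : Fin n, (y - a k)) ≤ v (∏ k : Fin n, (x - a k))) :
    ∃ x : ℕ → V, (∀ m, x m ∈ E) ∧
      ∃ k : Fin n, StrictAnti fun m => v (x m - a k) := by
  classical
  push_neg at hnotatt
  have key : ∀ y ∈ E, ∃ z ∈ E,
      v (∏ k : Fin n, (z - a k)) < v (∏ k : Fin n, (y - a k)) := hnotatt
  choose F hFmem hFlt using key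
  obtain ⟨y0, hy0⟩ := hE.nonempty
  -- construct a sequence with strictly decreasing v(h(x m))
  let x : ℕ → {z : V // z ∈ E} := fun m =>
    Nat.rec ⟨y0, hy0⟩ (fun _ p => ⟨F p.1 p.2, hFmem p.1 p.2⟩) m
  have hxE : ∀ m, (x m).1 ∈ E := fun m => (x m).2
  have hdec : ∀ m, v (∏ k : Fin n, ((x (m + 1)).1 - a k)) <
      v (∏ k : Fin n, ((x m).1 - a k)) := fun m => hFlt _ _
  -- pass to a subsequence where every coordinate is monotone or antitone
  obtain ⟨φ, hφ, hma⟩ := exists_mono_or_anti_multi n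
    (fun m k => v ((x m).1 - a k))
  set g : ℕ → Fin n → WithTop ℝ := fun m k => v ((x (φ m)).1 - a k) with hg
  have hsumdec : ∀ m, (∑ k : Fin n, g (m + 1) k) < ∑ k : Fin n, g m k := by
    intro m
    have h1 : φ m < φ (m + 1) := hφ (Nat.lt_succ_self m)
    have h2 : StrictAnti fun m => v (∏ k : Fin n, ((x m).1 - a k)) :=
      strictAnti_nat_of_succ_lt hdec
    have h3 : v (∏ k : Fin n, ((x (φ (m + 1))).1 - a k)) <
        v (∏ k : Fin n, ((x (φ m)).1 - a k)) := h2 h1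
    rw [addval_prod, addval_prod] at h3
    exact h3
  -- at each step, some coordinate strictly decreases
  have hstep : ∀ m, ∃ k : Fin n, g (m + 1) k < g m k := by
    intro m
    by_contra hcon
    push_neg at hcon
    exact absurd (Finset.sum_le_sum fun k _ => hcon k) (not_le.mpr (hsumdec m))
  choose c hc using hstep
  -- some coordinate decreases at infinitely many steps
  obtain ⟨k, hk⟩ := Finite.exists_infinite_fiber c
  have hkinf : {m | c m = k}.Infinite := by
    have h4 := Set.infinite_coe_iff.mp hk
    convert h4 using 1
    ext m; simp
  -- the k-th coordinate must be antitone along φ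
  have hanti : Antitone fun m => g m k := by
    rcases hma k with h | h
    · exfalso
      obtain ⟨m, hm⟩ := hkinf.nonempty
      have := hc m
      rw [hm] at this
      exact absurd (h (Nat.le_succ m)) (not_le.mpr this)
    · exact h
  -- enumerate the infinitely many decreasing steps
  let e : ℕ → ℕ := Nat.nth (· ∈ {m | c m = k})
  have he : StrictMono e := Nat.nth_strictMono hkinf
  have hemem : ∀ i, c (e i) = k := fun i => Nat.nth_mem_of_infinite hkinf i
  refine ⟨fun m => (x (φ (e m))).1, fun m => hxE _, k, ?_⟩
  have hsa : StrictAnti fun m => g (e m) k := by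
    intro i j hij
    have h1 : g (e i + 1) k < g (e i) k := by
      have := hc (e i); rwa [hemem i] at this
    have h2 : g (e j) k ≤ g (e i + 1) k := hanti (Nat.succ_le_of_lt (he hij))
    exact h2.trans_lt h1
  exact hsa
end

section
/- Let V be a valuation domain with maximal ideal m, E ⊆ V, and suppose every polynomial f ∈ Int(E,V) takes only finitely many values on E modulo m. Then every prime ideal P of Int(E,V) containing Int(E,m) = {f ∈ K[X] | f(E) ⊆ m} is a maximal ideal, and the residue field Int(E,V)/P is isomorphic to V/m. -/
open Polynomial

/-- The ring of integer-valued polynomials on `E` with respect to `V`,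
as a subring of `K[X]`. -/
noncomputable def IntER (V K : Type*) [CommRing V] [Field K] [Algebra V K] (E : Set V) :
    Subring (Polynomial K) :=
  ⨅ x ∈ E, ((algebraMap V K).range.comap (Polynomial.evalRingHom (algebraMap V K x)))

lemma mem_IntER {V K : Type*} [CommRing V] [Field K] [Algebra V K] {E : Set V}
    {p : Polynomial K} :
    p ∈ IntER V K E ↔ ∀ x ∈ E, p.eval (algebraMap V K x) ∈ (algebraMap V K).range := by
  simp [IntER, Subring.mem_iInf, Subring.mem_comap]

theorem stmt_11 (V : Type*) [CommRing V] [IsDomain V] [ValuationRing V]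
    (K : Type*) [Field K] [Algebra V K] [IsFractionRing V K] (E : Set V)
    -- every `f ∈ Int(E,V)` takes only finitely many values on `E` modulo `m`
    (hfin : ∀ f : IntER V K E,
      Set.Finite (Ideal.Quotient.mk (IsLocalRing.maximalIdeal V) ''
        {y : V | ∃ x ∈ E, algebraMap V K y = (f : Polynomial K).eval (algebraMap V K x)}))
    (P : Ideal (IntER V K E)) (hP : P.IsPrime)
    -- `P` contains `Int(E, m)`
    (hPm : ∀ f : IntER V K E,
      (∀ x ∈ E, (f : Polynomial K).eval (algebraMap V K x) ∈
        algebraMap V K '' (IsLocalRing.maximalIdeal V)) → f ∈ P) :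
    P.IsMaximal ∧
      Nonempty ((IntER V K E ⧸ P) ≃+* V ⧸ IsLocalRing.maximalIdeal V) := by
  classical
  -- E is nonempty (otherwise 1 ∈ P, contradiction)
  rcases E.eq_empty_or_nonempty with hE | hE
  · exact absurd (hPm 1 (by simp [hE])) (fun h => hP.ne_top (Ideal.eq_top_of_isUnit_mem _ h isUnit_one))
  set m := IsLocalRing.maximalIdeal V with hm
  -- the constant embedding ψ : V → IntER
  have hmemC : ∀ a : V, Polynomial.C (algebraMap V K a) ∈ IntER V K E := by
    intro a
    rw [mem_IntER]
    intro x _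
    simpa using ⟨a, rfl⟩
  let ψ : V →+* IntER V K E :=
    ((Polynomial.C : K →+* Polynomial K).comp (algebraMap V K)).codRestrict _ hmemC
  let φ : V →+* (IntER V K E ⧸ P) := (Ideal.Quotient.mk P).comp ψ
  -- surjectivity of φ
  have hsurj : Function.Surjective φ := by
    rintro q
    obtain ⟨f, rfl⟩ := Ideal.Quotient.mk_surjective q
    set S := (hfin f).toFinset with hS
    -- pick representatives
    have hrep : ∀ s ∈ S, ∃ a : V, Ideal.Quotient.mk m a = s := by
      intro s _
      exact Ideal.Quotient.mk_surjective s
    choose a ha using hrep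
    -- the product polynomial
    let g : IntER V K E := ∏ s ∈ S.attach, (f - ψ (a s.1 s.2))
    have hg : g ∈ P := by
      apply hPm
      intro x hx
      obtain ⟨y, hy⟩ := (mem_IntER.mp f.2) x hx
      have hyS : Ideal.Quotient.mk m y ∈ S := by
        rw [hS, Set.Finite.mem_toFinset]
        exact ⟨y, ⟨x, hx, hy⟩, rfl⟩
      -- evaluate the product
      have heval : (g : Polynomial K).eval (algebraMap V K x)
          = algebraMap V K (∏ s ∈ S.attach, (y - a s.1 s.2)) := by
        have : (g : Polynomial K) = ∏ s ∈ S.attach, ((f : Polynomial K) - Polynomial.C (algebraMap V K (a s.1 s.2))) := by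
          simp only [g]
          push_cast
          rfl
        rw [this, Polynomial.eval_prod, map_prod]
        apply Finset.prod_congr rfl
        intro s _
        simp [← hy, map_sub]
      rw [heval]
      refine ⟨_, ?_, rfl⟩
      -- the product lies in m
      have hmem : y - a (Ideal.Quotient.mk m y) hyS ∈ m := by
        rw [← Ideal.Quotient.eq_zero_iff_mem, map_sub, ha, sub_self]
      have := Finset.prod_erase_mul S.attach (fun s => (y - a s.1 s.2))
        (Finset.mem_attach S ⟨Ideal.Quotient.mk m y, hyS⟩)
      rw [← this]
      exact Ideal.mul_mem_left _ _ hmem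
    -- P prime, so some factor is in P
    obtain ⟨s, _, hr⟩ := Ideal.IsPrime.prod_mem_iff.mp hg
    refine ⟨a s.1 s.2, ?_⟩
    have : Ideal.Quotient.mk P f = Ideal.Quotient.mk P (ψ (a s.1 s.2)) := by
      rw [Ideal.Quotient.mk_eq_mk_iff_sub_mem]
      simpa using hr
    simp only [φ, RingHom.comp_apply]
    exact this.symm
  -- kernel of φ is m
  have hker : RingHom.ker φ = m := by
    ext a
    constructor
    · intro haker
      by_contra ham
      -- a is a unit, so ψ a is a unit in IntER, so ψ a ∉ P
      have hu : IsUnit a := by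
        rw [hm] at ham
        exact not_not.mp fun h => ham (IsLocalRing.mem_maximalIdeal a |>.mpr h)
      have : ψ a ∈ P := by
        simpa [φ, RingHom.mem_ker, Ideal.Quotient.eq_zero_iff_mem] using haker
      exact hP.ne_top (Ideal.eq_top_of_isUnit_mem _ this (hu.map ψ))
    · intro ham
      have : ψ a ∈ P := by
        apply hPm
        intro x hx
        exact ⟨a, ham, by simp [ψ, RingHom.codRestrict]⟩
      simpa [φ, RingHom.mem_ker, Ideal.Quotient.eq_zero_iff_mem] using this
  haveI : IsLocalRing V := ValuationRing.isLocalRing V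
  haveI : m.IsMaximal := IsLocalRing.maximalIdeal.isMaximal V
  letI : Field (V ⧸ m) := Ideal.Quotient.field m
  -- conclude
  let e : (V ⧸ m) ≃+* (IntER V K E ⧸ P) :=
    hker ▸ RingHom.quotientKerEquivOfSurjective hsurj
  refine ⟨?_, ⟨e.symm⟩⟩
  exact Ideal.Quotient.maximal_of_isField _ (e.symm.toMulEquiv.isField (Field.toIsField (V ⧸ m)))
end

section
/- Let R be a commutative ring with nonzero ideals A and B such that every maximal ideal of R contains exactly one of A, B (i.e., Max(R) is the disjoint union of the maximal ideals containing A and those containing B). If R/A and R/B are local-global rings, then R is local-global. -/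
/-- A commutative ring `R` is *local-global* if every polynomial in finitely many
variables over `R` which represents a unit over every localization of `R` at a
maximal ideal also represents a unit over `R`. -/
def IsLocalGlobal (R : Type*) [CommRing R] : Prop :=
  ∀ (n : ℕ) (f : MvPolynomial (Fin n) R),
    (∀ (M : Ideal R) (hM : M.IsMaximal),
      ∃ w : Fin n → Localization (@Ideal.primeCompl R _ M hM.isPrime),
        IsUnit (MvPolynomial.aeval w f)) →
    ∃ w : Fin n → R, IsUnit (MvPolynomial.aeval w f)

/-- If `f` represents a unit at every localization of `R` at a maximal ideal, then
its image mod `C` represents a unit at every localization of `R⧸C`. -/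
lemma quot_loc_aux {R : Type*} [CommRing R] (C : Ideal R) (n : ℕ)
    (f : MvPolynomial (Fin n) R)
    (hf : ∀ (M : Ideal R) (hM : M.IsMaximal),
      ∃ w : Fin n → Localization (@Ideal.primeCompl R _ M hM.isPrime),
        IsUnit (MvPolynomial.aeval w f)) :
    ∀ (N : Ideal (R ⧸ C)) (hN : N.IsMaximal),
      ∃ w : Fin n → Localization (@Ideal.primeCompl (R ⧸ C) _ N hN.isPrime),
        IsUnit (MvPolynomial.aeval w (MvPolynomial.map (Ideal.Quotient.mk C) f)) := by
  intro N hN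
  set M := N.comap (Ideal.Quotient.mk C) with hM
  have hMmax : M.IsMaximal :=
    Ideal.comap_isMaximal_of_surjective _ Ideal.Quotient.mk_surjective
  obtain ⟨w, hw⟩ := hf M hMmax
  set L' := Localization (@Ideal.primeCompl (R ⧸ C) _ N hN.isPrime)
  set φ : R →+* L' := (algebraMap (R ⧸ C) L').comp (Ideal.Quotient.mk C) with hφ
  have hunit : ∀ s : M.primeCompl, IsUnit (φ s) := by
    rintro ⟨s, hs⟩
    have hs' : (Ideal.Quotient.mk C s) ∈ N.primeCompl := fun h => hs h
    exact IsLocalization.map_units L' (⟨_, hs'⟩ : N.primeCompl)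
  set ψ : Localization (@Ideal.primeCompl R _ M hMmax.isPrime) →+* L' :=
    IsLocalization.lift (M := M.primeCompl) hunit with hψ
  refine ⟨fun i => ψ (w i), ?_⟩
  have hcomp : ψ.comp (algebraMap R _) = φ := IsLocalization.lift_comp hunit
  have heq : (MvPolynomial.aeval (fun i => ψ (w i)))
      (MvPolynomial.map (Ideal.Quotient.mk C) f) = ψ ((MvPolynomial.aeval w) f) := by
    rw [MvPolynomial.aeval_def, MvPolynomial.aeval_def, MvPolynomial.eval₂_map,
      MvPolynomial.eval₂_comp_left ψ, hcomp]
    rfl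
  rw [heq]
  exact hw.map ψ

lemma unit_of_quots {R : Type*} [CommRing R] (A B : Ideal R)
    (hsplit : ∀ M : Ideal R, M.IsMaximal → (A ≤ M ↔ ¬ B ≤ M)) (x : R)
    (hxA : IsUnit (Ideal.Quotient.mk A x)) (hxB : IsUnit (Ideal.Quotient.mk B x)) :
    IsUnit x := by
  rw [← Ideal.span_singleton_eq_top]
  by_contra h
  obtain ⟨M, hM, hle⟩ := Ideal.exists_le_maximal _ h
  have hxM : x ∈ M := hle (Ideal.subset_span rfl)
  have hzero : ∀ (C : Ideal R), C ≤ M → IsUnit (Ideal.Quotient.mk C x) → False := by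
    intro C hCM hu
    have hu' := hu.map (Ideal.Quotient.factor hCM)
    rw [Ideal.Quotient.factor_mk] at hu'
    rw [Ideal.Quotient.eq_zero_iff_mem.mpr hxM] at hu'
    haveI : Nontrivial (R ⧸ M) := Ideal.Quotient.nontrivial_iff.mpr hM.ne_top
    exact not_isUnit_zero hu'
  by_cases hAM : A ≤ M
  · exact hzero A hAM hxA
  · exact hzero B (not_not.mp (fun h => hAM ((hsplit M hM).mpr h))) hxB

theorem stmt_12 {R : Type*} [CommRing R] (A B : Ideal R)
    (hA : A ≠ ⊥) (hB : B ≠ ⊥)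
    (hsplit : ∀ M : Ideal R, M.IsMaximal → (A ≤ M ↔ ¬ B ≤ M))
    (hRA : IsLocalGlobal (R ⧸ A)) (hRB : IsLocalGlobal (R ⧸ B)) :
    IsLocalGlobal R := by
  intro n f hf
  obtain ⟨wA, hwA⟩ := hRA n (MvPolynomial.map (Ideal.Quotient.mk A) f)
    (quot_loc_aux A n f hf)
  obtain ⟨wB, hwB⟩ := hRB n (MvPolynomial.map (Ideal.Quotient.mk B) f)
    (quot_loc_aux B n f hf)
  -- coprimality
  have hsup : A ⊔ B = ⊤ := by
    by_contra h
    obtain ⟨M, hM, hle⟩ := Ideal.exists_le_maximal _ h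
    exact ((hsplit M hM).mp (le_trans le_sup_left hle)) (le_trans le_sup_right hle)
  obtain ⟨a, haA, b, hbB, hab⟩ := Submodule.mem_sup.mp (hsup ▸ Submodule.mem_top (x := (1 : R)))
  -- lift the witnesses
  choose wA' hwA' using fun i => Ideal.Quotient.mk_surjective (wA i)
  choose wB' hwB' using fun i => Ideal.Quotient.mk_surjective (wB i)
  set w : Fin n → R := fun i => wB' i * a + wA' i * b with hw
  have hwmkA : ∀ i, Ideal.Quotient.mk A (w i) = wA i := by
    intro i
    have ha0 : Ideal.Quotient.mk A a = 0 := Ideal.Quotient.eq_zero_iff_mem.mpr haA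
    have hb1 : Ideal.Quotient.mk A b = 1 := by
      have : Ideal.Quotient.mk A (a + b) = 1 := by rw [hab]; simp
      simpa [ha0] using this
    simp [hw, ha0, hb1, hwA']
  have hwmkB : ∀ i, Ideal.Quotient.mk B (w i) = wB i := by
    intro i
    have hb0 : Ideal.Quotient.mk B b = 0 := Ideal.Quotient.eq_zero_iff_mem.mpr hbB
    have ha1 : Ideal.Quotient.mk B a = 1 := by
      have : Ideal.Quotient.mk B (a + b) = 1 := by rw [hab]; simp
      simpa [hb0] using this
    simp [hw, hb0, ha1, hwB']
  refine ⟨w, ?_⟩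
  have hmkeq : ∀ (C : Ideal R) (wc : Fin n → R ⧸ C),
      (∀ i, Ideal.Quotient.mk C (w i) = wc i) →
      Ideal.Quotient.mk C (MvPolynomial.aeval w f)
        = MvPolynomial.aeval wc (MvPolynomial.map (Ideal.Quotient.mk C) f) := by
    intro C wc hwc
    rw [MvPolynomial.aeval_def, MvPolynomial.aeval_def, MvPolynomial.eval₂_map,
      MvPolynomial.eval₂_comp_left (Ideal.Quotient.mk C)]
    congr 1
    funext i; exact hwc i
  refine unit_of_quots A B hsplit _ ?_ ?_
  · rw [hmkeq A wA hwmkA]; exact hwA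
  · rw [hmkeq B wB hwmkB]; exact hwB
end

section
/- Let V be a rank-one valuation domain with valuation v, maximal ideal m, fraction field K, and let {x_n} be a pseudo-convergent sequence of elements of E ⊆ V. Then M = {f ∈ Int(E,V) | f(x_n) ∈ m for all sufficiently large n} is a prime ideal of Int(E,V). -/
open Polynomial

/-- The valuation ring of a rank-one (real-valued, additive) valuation on a field `K`:
the subring of elements of nonnegative valuation. -/
noncomputable def valRing (K : Type*) [Field K] (v : AddValuation K (WithTop ℝ)) :
    Subring K where
  carrier := {x | 0 ≤ v x}
  zero_mem' := by simp [Set.mem_setOf_eq, AddValuation.map_zero]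
  one_mem' := by simp [Set.mem_setOf_eq]
  add_mem' := fun {a b} ha hb => le_trans (le_min ha hb) (v.map_add a b)
  mul_mem' := fun {a b} ha hb => by
    simp only [Set.mem_setOf_eq, v.map_mul]; exact add_nonneg ha hb
  neg_mem' := fun {a} ha => by simpa [v.map_neg] using ha

/-- The ring of integer-valued polynomials `Int(E,V)` for `V` the valuation ring
of `v`, as a subring of `K[X]`. -/
noncomputable def IntD (K : Type*) [Field K] (v : AddValuation K (WithTop ℝ))
    (E : Set K) : Subring (Polynomial K) :=
  ⨅ x ∈ E, (valRing K v).comap (Polynomial.evalRingHom x)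


section Toolkit
variable {K : Type*} [Field K] (v : AddValuation K (WithTop ℝ))

lemma av_ne_top {a : K} (ha : a ≠ 0) : v a ≠ ⊤ := by
  intro h
  have := v.map_mul a a⁻¹
  rw [mul_inv_cancel₀ ha, v.map_one, h, top_add] at this
  simp at this

lemma av_add_eq_left {a b : K} (h : v a < v b) : v (a + b) = v a := by
  have h1 : min (v a) (v b) ≤ v (a + b) := v.map_add a b
  rw [min_eq_left h.le] at h1
  rcases lt_or_ge (v a) (v (a + b)) with h2 | h2
  · exfalso
    have heq : v a = v ((a + b) + (-b)) := by ring_nf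
    have h3 : min (v (a+b)) (v (-b)) ≤ v ((a+b) + (-b)) := v.map_add _ _
    rw [v.map_neg, ← heq] at h3
    exact absurd h3 (not_le.mpr (lt_min h2 h))
  · exact le_antisymm h2 h1

lemma av_sum_lt {ι : Type*} (s : Finset ι) (g : ι → K) (y : WithTop ℝ) (hy : y ≠ ⊤)
    (h : ∀ i ∈ s, y < v (g i)) : y < v (∑ i ∈ s, g i) := by
  classical
  induction s using Finset.cons_induction with
  | empty => simpa [v.map_zero] using lt_top_iff_ne_top.mpr hy
  | cons a t hat ih =>
      rw [Finset.sum_cons]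
      calc y < min (v (g a)) (v (∑ i ∈ t, g i)) :=
              lt_min (h a (Finset.mem_cons_self _ _)) (ih fun i hi => h i (Finset.mem_cons_of_mem hi))
           _ ≤ _ := v.map_add _ _

lemma av_sum_eq {ι : Type*} [DecidableEq ι] (s : Finset ι) (g : ι → K) (k₀ : ι)
    (hk₀ : k₀ ∈ s) (hne : v (g k₀) ≠ ⊤)
    (h : ∀ j ∈ s, j ≠ k₀ → v (g k₀) < v (g j)) : v (∑ i ∈ s, g i) = v (g k₀) := by
  rw [← Finset.add_sum_erase s g hk₀]
  rcases Finset.eq_empty_or_nonempty (s.erase k₀) with he | hne'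
  · rw [he]; simp
  · rw [av_add_eq_left]
    exact av_sum_lt v _ _ _ hne fun i hi =>
      h i (Finset.mem_of_mem_erase hi) (Finset.ne_of_mem_erase hi)

lemma coe_nsmul_wt (k : ℕ) (b : ℝ) : ((k • b : ℝ) : WithTop ℝ) = k • (b : WithTop ℝ) := by
  induction k with
  | zero => simp
  | succ n ih => rw [succ_nsmul, succ_nsmul, ← ih, WithTop.coe_add]

lemma coe_untop_wt {a : WithTop ℝ} (h : a ≠ ⊤) : ((WithTop.untopD 0 a : ℝ) : WithTop ℝ) = a := by
  cases a with
  | top => exact absurd rfl h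
  | coe r => rfl

end Toolkit

section Taylor
variable {K : Type*} [Field K]

lemma taylor_expand (f : K[X]) (r a : K) :
    f.eval r = ∑ i ∈ Finset.range (f.natDegree + 1), ((hasseDeriv i f).eval a) * (r - a)^i := by
  have h1 : f.eval r = (taylor a f).eval (r - a) := by
    rw [taylor_apply, eval_comp]; simp
  rw [h1, eval_eq_sum_range (p := taylor a f) (r - a), natDegree_taylor]
  exact Finset.sum_congr rfl fun i _ => by rw [taylor_coeff]

lemma taylor_diff (f : K[X]) (r a : K) :
    f.eval r - f.eval a =
      ∑ i ∈ Finset.range f.natDegree, ((hasseDeriv (i+1) f).eval a) * (r - a)^(i+1) := by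
  have h := taylor_expand f r a
  rw [Finset.sum_range_succ' (fun i => ((hasseDeriv i f).eval a) * (r - a)^i) f.natDegree] at h
  simp only [hasseDeriv_zero, pow_zero, mul_one, LinearMap.id_coe, id_eq] at h
  rw [h]; ring

end Taylor

section PC
variable {K : Type*} [Field K] (v : AddValuation K (WithTop ℝ)) (x : ℕ → K)

noncomputable def gam : ℕ → WithTop ℝ := fun m => v (x (m+1) - x m)

lemma gam_strictMono (hpc : ∀ l m n : ℕ, l < m → m < n → v (x m - x l) < v (x n - x m)) :
    StrictMono (gam v x) := by
  apply strictMono_nat_of_lt_succ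
  intro m
  exact hpc m (m+1) (m+2) (Nat.lt_succ_self m) (Nat.lt_succ_self (m+1))

lemma gam_ne_top (hpc : ∀ l m n : ℕ, l < m → m < n → v (x m - x l) < v (x n - x m)) (m : ℕ) :
    gam v x m ≠ ⊤ :=
  ne_top_of_lt (lt_of_lt_of_le (gam_strictMono v x hpc (Nat.lt_succ_self m)) le_top)

lemma v_sub_eq_gam (hpc : ∀ l m n : ℕ, l < m → m < n → v (x m - x l) < v (x n - x m)) :
    ∀ m n : ℕ, m < n → v (x n - x m) = gam v x m := by
  intro m n hmn
  induction n with
  | zero => omega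
  | succ n ih =>
      rcases Nat.lt_or_ge m n with h | h
      · have h1 : x (n+1) - x m = (x n - x m) + (x (n+1) - x n) := by ring
        rw [h1, av_add_eq_left]
        · exact ih h
        · rw [ih h]; exact gam_strictMono v x hpc h
      · have : m = n := by omega
        subst this; rfl

end PC

section Main
variable {K : Type*} [Field K]

theorem main_lemma (v : AddValuation K (WithTop ℝ)) (x : ℕ → K)
    (hpc : ∀ l m n : ℕ, l < m → m < n → v (x m - x l) < v (x n - x m)) :
    ∀ (d : ℕ) (f : K[X]), f ≠ 0 → f.natDegree ≤ d →
    ∃ (L : WithTop ℝ) (N : ℕ),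
      (∀ n, N ≤ n → v (f.eval (x n)) ≤ L) ∧
      (∀ y : WithTop ℝ, y < L → ∃ N', ∀ n, N' ≤ n → y < v (f.eval (x n))) := by
  intro d
  induction d with
  | zero =>
      intro f hf hdeg
      obtain ⟨a, ha⟩ : ∃ a, f = C a := ⟨f.coeff 0, eq_C_of_natDegree_le_zero hdeg⟩
      have hane : a ≠ 0 := fun h => hf (by rw [ha, h, map_zero])
      refine ⟨v a, 0, fun n _ => by rw [ha, eval_C], fun y hy => ⟨0, fun n _ => by rw [ha, eval_C]; exact hy⟩⟩
  | succ d ih =>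
      intro f hf hdeg
      rcases Nat.lt_or_ge d f.natDegree with hgt | hle
      swap
      · exact ih f hf hle
      have hD : f.natDegree = d + 1 := by omega
      classical
      -- IH data for Hasse derivatives
      have IH2 : ∀ i : ℕ, ∃ (L : WithTop ℝ) (Nu : ℕ), hasseDeriv (i+1) f ≠ 0 →
          ((∀ n, Nu ≤ n → v ((hasseDeriv (i+1) f).eval (x n)) ≤ L) ∧
           (∀ y : WithTop ℝ, y < L → ∃ N', ∀ n, N' ≤ n →
              y < v ((hasseDeriv (i+1) f).eval (x n)))) := by
        intro i
        by_cases hz : hasseDeriv (i+1) f = 0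
        · exact ⟨⊤, 0, fun h => absurd hz h⟩
        · obtain ⟨L, N, h1, h2⟩ := ih _ hz
            (le_trans (natDegree_hasseDeriv_le f (i+1)) (by omega))
          exact ⟨L, N, fun _ => ⟨h1, h2⟩⟩
      choose L Nu hLN using IH2
      -- the top Hasse derivative is a nonzero constant
      have hhd_c : (hasseDeriv (d+1) f).coeff 0 ≠ 0 := by
        rw [hasseDeriv_coeff]
        simp only [zero_add, Nat.choose_self, Nat.cast_one, one_mul]
        rw [← hD, ← Polynomial.leadingCoeff]
        exact leadingCoeff_ne_zero.mpr hf
      have hhd_ne : hasseDeriv (d+1) f ≠ 0 := fun h => hhd_c (by rw [h, coeff_zero])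
      have hconst : hasseDeriv (d+1) f = C ((hasseDeriv (d+1) f).coeff 0) :=
        eq_C_of_natDegree_le_zero (by
          have := natDegree_hasseDeriv_le f (d+1); omega)
      have hLd_ne_top : L d ≠ ⊤ := by
        intro htop
        have hvc : v ((hasseDeriv (d+1) f).coeff 0) < ⊤ :=
          lt_top_iff_ne_top.mpr (av_ne_top v hhd_c)
        obtain ⟨N', hN'⟩ := (hLN d hhd_ne).2 (v ((hasseDeriv (d+1) f).coeff 0)) (htop ▸ hvc)
        have hlt := hN' N' le_rfl
        have heval : (hasseDeriv (d+1) f).eval (x N') = (hasseDeriv (d+1) f).coeff 0 := by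
          conv_lhs => rw [hconst]
          rw [eval_C]
        rw [heval] at hlt
        exact lt_irrefl _ hlt
      set F' : Finset ℕ :=
        (Finset.range (d+1)).filter (fun i => hasseDeriv (i+1) f ≠ 0 ∧ L i ≠ ⊤) with hF'def
      have hF'ne : F'.Nonempty :=
        ⟨d, Finset.mem_filter.mpr ⟨Finset.mem_range.mpr (Nat.lt_succ_self d), hhd_ne, hLd_ne_top⟩⟩
      set L' : ℕ → ℝ := fun i => WithTop.untopD 0 (L i) with hL'def
      have hL'coe : ∀ i ∈ F', ((L' i : ℝ) : WithTop ℝ) = L i := fun i hi =>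
        coe_untop_wt ((Finset.mem_filter.mp hi).2.2)
      set γ' : ℕ → ℝ := fun m => WithTop.untopD 0 (gam v x m) with hγ'def
      have hγcoe : ∀ m, ((γ' m : ℝ) : WithTop ℝ) = gam v x m := fun m =>
        coe_untop_wt (gam_ne_top v x hpc m)
      have hγ'mono : StrictMono γ' := by
        intro a b h
        have h2 := gam_strictMono v x hpc h
        rw [← hγcoe a, ← hγcoe b] at h2
        exact_mod_cast h2
      set W : ℕ → ℝ := fun m => (F'.image (fun i => L' i + (i+1) • γ' m)).min'
        (hF'ne.image _) with hWdef
      have hWle : ∀ m, ∀ i ∈ F', W m ≤ L' i + (i+1) • γ' m := fun m i hi =>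
        Finset.min'_le _ _ (Finset.mem_image_of_mem _ hi)
      have hWmem : ∀ m, ∃ i ∈ F', L' i + (i+1) • γ' m = W m := fun m =>
        Finset.mem_image.mp (Finset.min'_mem _ (hF'ne.image _))
      have hsmul_lt : ∀ (i : ℕ) {a b : ℝ}, a < b → (i+1) • a < (i+1) • b := by
        intro i a b h
        simp only [nsmul_eq_mul]
        have : (0:ℝ) < (i:ℝ) + 1 := by positivity
        calc ((i+1 : ℕ) : ℝ) * a < ((i+1 : ℕ) : ℝ) * b := by
              apply mul_lt_mul_of_pos_left h; push_cast; linarith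
          _ = _ := rfl
      have hWmono : ∀ m n, m < n → W m < W n := by
        intro m n hmn
        obtain ⟨i, hi, heq⟩ := hWmem n
        calc W m ≤ L' i + (i+1) • γ' m := hWle m i hi
          _ < L' i + (i+1) • γ' n := by
              have := hsmul_lt i (hγ'mono hmn); linarith
          _ = W n := heq
      -- goodness
      have hM₂ : ∃ M₂ : ℕ, ∀ m, M₂ ≤ m →
          ∀ i ∈ F', ∀ j ∈ F', i ≠ j →
            L' i + (i+1) • γ' m ≠ L' j + (j+1) • γ' m := by
        have hsub : ∀ i j : ℕ, i ≠ j →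
            Set.Subsingleton {m | L' i + (i+1) • γ' m = L' j + (j+1) • γ' m} := by
          intro i j hij a ha b hb
          simp only [Set.mem_setOf_eq, nsmul_eq_mul] at ha hb
          apply hγ'mono.injective
          have hcne : ((i:ℝ) + 1) - ((j:ℝ) + 1) ≠ 0 := by
            intro h
            apply hij
            have : (i : ℝ) = j := by linarith
            exact_mod_cast this
          have h1 : (((i:ℝ)+1) - ((j:ℝ)+1)) * γ' a = L' j - L' i := by push_cast at ha ⊢; linarith
          have h2 : (((i:ℝ)+1) - ((j:ℝ)+1)) * γ' b = L' j - L' i := by push_cast at hb ⊢; linarith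
          exact mul_left_cancel₀ hcne (h1.trans h2.symm)
        have hfin : Set.Finite {m : ℕ | ¬ (∀ i ∈ F', ∀ j ∈ F', i ≠ j →
            L' i + (i+1) • γ' m ≠ L' j + (j+1) • γ' m)} := by
          apply Set.Finite.subset
            (Set.Finite.biUnion (F'.finite_toSet) (fun i _ =>
              Set.Finite.biUnion (F'.finite_toSet) (fun j _ =>
                Set.Finite.subset (Set.Finite.union
                  (Set.finite_empty)
                  ((Set.Subsingleton.finite (α := ℕ) (s := {m | L' i + (i+1) • γ' m = L' j + (j+1) • γ' m ∧ i ≠ j})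
                    (fun a ha b hb => by
                      rcases ha with ⟨ha1, hane⟩
                      rcases hb with ⟨hb1, _⟩
                      exact hsub i j hane ha1 hb1))))
                  (by intro z hz; right; exact hz))))
          intro m hm
          simp only [Set.mem_setOf_eq] at hm
          push_neg at hm
          obtain ⟨i, hi, j, hj, hij, heq⟩ := hm
          refine Set.mem_biUnion hi (Set.mem_biUnion hj ?_)
          exact ⟨heq, hij⟩
        obtain ⟨B, hB⟩ := hfin.bddAbove
        refine ⟨B + 1, fun m hm => ?_⟩
        by_contra hbad
        have hmB : m ≤ B := hB hbad
        omega
      obtain ⟨M₂, hM₂⟩ := hM₂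
      -- terms
      set term : ℕ → ℕ → ℕ → K := fun m n i =>
        (hasseDeriv (i+1) f).eval (x n) * (x m - x n)^(i+1) with htermdef
      have hterm : ∀ m n i, m < n →
          v (term m n i) = v ((hasseDeriv (i+1) f).eval (x n)) + (i+1) • gam v x m := by
        intro m n i hmn
        rw [htermdef]
        simp only
        rw [v.map_mul, AddValuation.map_pow, v.map_sub_swap, v_sub_eq_gam v x hpc m n hmn]
      have hdiffsum : ∀ m n : ℕ,
          f.eval (x m) - f.eval (x n) = ∑ i ∈ Finset.range (d+1), term m n i := by
        intro m n
        have h := taylor_diff f (x m) (x n)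
        rw [hD] at h
        exact h
      have hgamnsmul_ne : ∀ (j m : ℕ), (j+1) • gam v x m ≠ ⊤ := by
        intro j m
        rw [← hγcoe m, ← coe_nsmul_wt]
        exact WithTop.coe_ne_top
      -- core lower-bound lemma
      have core : ∀ (m j : ℕ) (y : ℝ),
          (hasseDeriv (j+1) f ≠ 0 → ((y - (j+1) • γ' m : ℝ) : WithTop ℝ) < L j) →
          ∃ Mj : ℕ, ∀ n, Mj ≤ n → m < n → (y : WithTop ℝ) < v (term m n j) := by
        intro m j y hy
        by_cases hz : hasseDeriv (j+1) f = 0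
        · refine ⟨0, fun n _ _ => ?_⟩
          have : term m n j = 0 := by rw [htermdef]; simp [hz]
          rw [this, v.map_zero]
          exact WithTop.coe_lt_top y
        · obtain ⟨N', hN'⟩ := (hLN j hz).2 _ (hy hz)
          refine ⟨N', fun n hn hmn => ?_⟩
          rw [hterm m n j hmn]
          calc (y : WithTop ℝ)
              = ((y - (j+1) • γ' m : ℝ) : WithTop ℝ) + (j+1) • gam v x m := by
                rw [← hγcoe m, ← coe_nsmul_wt, ← WithTop.coe_add, sub_add_cancel]
            _ < _ := WithTop.add_lt_add_right (hgamnsmul_ne j m) (hN' n hn)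
      -- P1 : exact upper bound for differences
      have P1 : ∀ m, (∀ i ∈ F', ∀ j ∈ F', i ≠ j →
            L' i + (i+1) • γ' m ≠ L' j + (j+1) • γ' m) →
          ∃ nm, m < nm ∧ ∀ n, nm ≤ n →
            v (f.eval (x m) - f.eval (x n)) ≤ ((W m : ℝ) : WithTop ℝ) := by
        intro m hg
        obtain ⟨k₀, hk₀F, hk₀W⟩ := hWmem m
        have hk₀z : hasseDeriv (k₀+1) f ≠ 0 := (Finset.mem_filter.mp hk₀F).2.1
        have hcore : ∀ j, ∃ Mj : ℕ, ∀ n, Mj ≤ n → m < n → j ∈ Finset.range (d+1) → j ≠ k₀ →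
            ((W m : ℝ) : WithTop ℝ) < v (term m n j) := by
          intro j
          by_cases hjr : j ∈ Finset.range (d+1) ∧ j ≠ k₀
          · have hy : hasseDeriv (j+1) f ≠ 0 →
                ((W m - (j+1) • γ' m : ℝ) : WithTop ℝ) < L j := by
              intro hz
              by_cases hjF : j ∈ F'
              · rw [← hL'coe j hjF]
                have h1 : W m ≤ L' j + (j+1) • γ' m := hWle m j hjF
                have h2 : W m ≠ L' j + (j+1) • γ' m := by
                  rw [← hk₀W]
                  exact hg k₀ hk₀F j hjF (fun h => hjr.2 h.symm)
                exact_mod_cast by linarith [lt_of_le_of_ne h1 h2]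
              · have hLj : L j = ⊤ := by
                  by_contra hLj
                  exact hjF (Finset.mem_filter.mpr ⟨hjr.1, hz, hLj⟩)
                rw [hLj]; exact WithTop.coe_lt_top _
            obtain ⟨Mj, hMj⟩ := core m j (W m) hy
            exact ⟨Mj, fun n h1 h2 _ _ => hMj n h1 h2⟩
          · exact ⟨0, fun n _ _ hr hne => absurd ⟨hr, hne⟩ hjr⟩
        choose MF hMF using hcore
        refine ⟨max (m+1) (max (Nu k₀) ((Finset.range (d+1)).sup MF)), lt_of_lt_of_le (Nat.lt_succ_self m) (le_max_left _ _),
          fun n hn => ?_⟩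
        have hmn : m < n := lt_of_lt_of_le (Nat.lt_succ_self m) (le_trans (le_max_left _ _) hn)
        have hnNu : Nu k₀ ≤ n := le_trans (le_trans (le_max_left _ _) (le_max_right _ _)) hn
        have hterm_k0 : v (term m n k₀) ≤ ((W m : ℝ) : WithTop ℝ) := by
          rw [hterm m n k₀ hmn]
          calc v ((hasseDeriv (k₀+1) f).eval (x n)) + (k₀+1) • gam v x m
              ≤ L k₀ + (k₀+1) • gam v x m :=
                add_le_add_left ((hLN k₀ hk₀z).1 n hnNu) _
            _ = ((W m : ℝ) : WithTop ℝ) := by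
                rw [← hL'coe k₀ hk₀F, ← hγcoe m, ← coe_nsmul_wt, ← WithTop.coe_add, hk₀W]
        rw [hdiffsum m n,
          av_sum_eq v _ _ k₀ (Finset.mem_range.mpr (Finset.mem_range.mp (Finset.mem_filter.mp hk₀F).1))
            ((lt_of_le_of_lt hterm_k0 (WithTop.coe_lt_top _)).ne)
            (fun j hj hjne => lt_of_le_of_lt hterm_k0
              (hMF j n (le_trans (le_trans (le_trans (Finset.le_sup hj) (le_max_right _ _)) (le_max_right _ _)) hn)
                hmn hj hjne))]
        exact hterm_k0
      -- P2 : lower bound for differences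
      have P2 : ∀ (m : ℕ) (y : ℝ), y < W m →
          ∃ nm, m < nm ∧ ∀ n, nm ≤ n →
            (y : WithTop ℝ) < v (f.eval (x m) - f.eval (x n)) := by
        intro m y hy
        have hcore : ∀ j, ∃ Mj : ℕ, ∀ n, Mj ≤ n → m < n → j ∈ Finset.range (d+1) →
            (y : WithTop ℝ) < v (term m n j) := by
          intro j
          by_cases hjr : j ∈ Finset.range (d+1)
          · have hy2 : hasseDeriv (j+1) f ≠ 0 →
                ((y - (j+1) • γ' m : ℝ) : WithTop ℝ) < L j := by
              intro hz
              by_cases hjF : j ∈ F'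
              · rw [← hL'coe j hjF]
                have h1 : W m ≤ L' j + (j+1) • γ' m := hWle m j hjF
                exact_mod_cast by linarith
              · have hLj : L j = ⊤ := by
                  by_contra hLj
                  exact hjF (Finset.mem_filter.mpr ⟨hjr, hz, hLj⟩)
                rw [hLj]; exact WithTop.coe_lt_top _
            obtain ⟨Mj, hMj⟩ := core m j y hy2
            exact ⟨Mj, fun n h1 h2 _ => hMj n h1 h2⟩
          · exact ⟨0, fun n _ _ hr => absurd hr hjr⟩
        choose MF hMF using hcore
        refine ⟨max (m+1) ((Finset.range (d+1)).sup MF), lt_of_lt_of_le (Nat.lt_succ_self m) (le_max_left _ _), fun n hn => ?_⟩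
        have hmn : m < n := lt_of_lt_of_le (Nat.lt_succ_self m) (le_trans (le_max_left _ _) hn)
        rw [hdiffsum m n]
        exact av_sum_lt v _ _ _ WithTop.coe_ne_top
          (fun j hj => hMF j n (le_trans (le_trans (Finset.le_sup hj) (le_max_right _ _)) hn) hmn hj)
      -- the limit value Lt for W
      have hLt : ∃ Lt : WithTop ℝ, (∀ m, ((W m : ℝ) : WithTop ℝ) < Lt) ∧
          (∀ y : WithTop ℝ, y < Lt → ∃ m₁, ∀ m, m₁ ≤ m → y < ((W m : ℝ) : WithTop ℝ)) := by
        by_cases hbdd : BddAbove (Set.range W)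
        · refine ⟨((⨆ m, W m : ℝ) : WithTop ℝ), fun m => ?_, fun y hy => ?_⟩
          · exact_mod_cast lt_of_lt_of_le (hWmono m (m+1) (Nat.lt_succ_self m)) (le_ciSup hbdd (m+1))
          · cases y with
            | top => exact absurd hy (by simp)
            | coe y₀ =>
                have : y₀ < ⨆ m, W m := by exact_mod_cast hy
                obtain ⟨m₀, hm₀⟩ := (lt_ciSup_iff hbdd).mp this
                refine ⟨m₀, fun m hm => ?_⟩
                rcases Nat.lt_or_ge m₀ m with h | h
                · exact_mod_cast lt_of_lt_of_le hm₀ (hWmono m₀ m h).le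
                · have : m = m₀ := by omega
                  subst this; exact_mod_cast hm₀
        · refine ⟨⊤, fun m => WithTop.coe_lt_top _, fun y hy => ?_⟩
          cases y with
          | top => exact absurd hy (lt_irrefl _)
          | coe y₀ =>
              obtain ⟨z, ⟨m₀, rfl⟩, hz⟩ := not_bddAbove_iff.mp hbdd y₀
              refine ⟨m₀, fun m hm => ?_⟩
              rcases Nat.lt_or_ge m₀ m with h | h
              · exact_mod_cast lt_of_lt_of_le hz (hWmono m₀ m h).le
              · have : m = m₀ := by omega
                subst this; exact_mod_cast hz
      obtain ⟨Lt, hLt1, hLt2⟩ := hLt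
      -- endgame
      by_cases hα : ∃ m, M₂ ≤ m ∧ v (f.eval (x m)) < ((W m : ℝ) : WithTop ℝ)
      · obtain ⟨m, hm, hvb⟩ := hα
        obtain ⟨c₀, hc₀⟩ := WithTop.ne_top_iff_exists.mp (ne_top_of_lt hvb)
        obtain ⟨nm, hnm, hP2⟩ := P2 m c₀ (by exact_mod_cast hc₀ ▸ hvb)
        have hconstval : ∀ n, nm ≤ n → v (f.eval (x n)) = v (f.eval (x m)) := by
          intro n hn
          have h1 : v (f.eval (x m)) < v (-(f.eval (x m) - f.eval (x n))) := by
            rw [v.map_neg]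
            exact hc₀ ▸ hP2 n hn
          have h2 : f.eval (x n) = f.eval (x m) + (-(f.eval (x m) - f.eval (x n))) := by ring
          rw [h2, av_add_eq_left v h1]
        refine ⟨v (f.eval (x m)), nm, fun n hn => le_of_eq (hconstval n hn),
          fun y hy => ⟨nm, fun n hn => by rw [hconstval n hn]; exact hy⟩⟩
      · push_neg at hα
        have heq : ∀ m, M₂ ≤ m → v (f.eval (x m)) = ((W m : ℝ) : WithTop ℝ) := by
          intro m hm
          by_contra hne
          have hgt : ((W m : ℝ) : WithTop ℝ) < v (f.eval (x m)) :=
            lt_of_le_of_ne (hα m hm) (fun h => hne h.symm)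
          obtain ⟨nm, hnm, hP1⟩ := P1 m (hM₂ m hm)
          set n := max nm M₂ with hn
          have hnmn : nm ≤ n := le_max_left _ _
          have hmn : m < n := lt_of_lt_of_le hnm hnmn
          have h1 : v (f.eval (x m) - f.eval (x n)) ≤ ((W m : ℝ) : WithTop ℝ) := hP1 n hnmn
          have h2 : v (f.eval (x n)) = v (f.eval (x m) - f.eval (x n)) := by
            have h3 : v (-(f.eval (x m) - f.eval (x n))) < v (f.eval (x m)) := by
              rw [v.map_neg]; exact lt_of_le_of_lt h1 hgt
            have h4 : f.eval (x n) = (-(f.eval (x m) - f.eval (x n))) + f.eval (x m) := by ring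
            conv_lhs => rw [h4]
            rw [av_add_eq_left v h3, v.map_neg]
          have h5 : ((W n : ℝ) : WithTop ℝ) ≤ v (f.eval (x n)) := hα n (le_max_right _ _)
          have h6 : v (f.eval (x n)) ≤ ((W m : ℝ) : WithTop ℝ) := h2 ▸ h1
          have h7 : ((W m : ℝ) : WithTop ℝ) < ((W n : ℝ) : WithTop ℝ) := by
            exact_mod_cast hWmono m n hmn
          exact absurd (lt_of_le_of_lt (le_trans h5 h6) h7) (lt_irrefl _)
        refine ⟨Lt, M₂, fun n hn => (heq n hn ▸ (hLt1 n).le),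
          fun y hy => ?_⟩
        obtain ⟨m₁, hm₁⟩ := hLt2 y hy
        exact ⟨max M₂ m₁, fun n hn =>
          (heq n (le_trans (le_max_left _ _) hn)) ▸ hm₁ n (le_trans (le_max_right _ _) hn)⟩

end Main

section Final
variable {K : Type*} [Field K]

theorem dichotomy (v : AddValuation K (WithTop ℝ)) (x : ℕ → K)
    (hpc : ∀ l m n : ℕ, l < m → m < n → v (x m - x l) < v (x n - x m))
    (f : K[X]) (hf : f ≠ 0) :
    (∃ N, ∀ n, N ≤ n → 0 < v (f.eval (x n))) ∨
    (∃ N, ∀ n, N ≤ n → v (f.eval (x n)) ≤ 0) := by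
  obtain ⟨L, N, h1, h2⟩ := main_lemma v x hpc f.natDegree f hf le_rfl
  rcases lt_or_ge 0 L with h | h
  · obtain ⟨N', hN'⟩ := h2 0 h
    exact Or.inl ⟨N', hN'⟩
  · exact Or.inr ⟨N, fun n hn => le_trans (h1 n hn) h⟩

end Final

theorem stmt_13 {K : Type*} [Field K] (v : AddValuation K (WithTop ℝ))
    (E : Set K) (hE : ∀ x ∈ E, 0 ≤ v x)
    (x : ℕ → K) (hxE : ∀ n, x n ∈ E)
    (hpc : ∀ l m n : ℕ, l < m → m < n → v (x m - x l) < v (x n - x m)) :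
    ∃ I : Ideal (IntD K v E),
      (I : Set (IntD K v E)) =
        {f : IntD K v E | ∃ N : ℕ, ∀ n : ℕ, N ≤ n →
          0 < v ((f : Polynomial K).eval (x n))} ∧
      I.IsPrime := by
  classical
  have memIntD : ∀ g : K[X], g ∈ IntD K v E ↔ ∀ a ∈ E, 0 ≤ v (g.eval a) := by
    intro g
    simp only [IntD, Subring.mem_iInf, Subring.mem_comap]
    constructor
    · intro h a ha
      exact h a ha
    · intro h a ha
      exact h a ha
  refine ⟨{
    carrier := {f : IntD K v E | ∃ N : ℕ, ∀ n : ℕ, N ≤ n →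
      0 < v ((f : Polynomial K).eval (x n))}
    add_mem' := ?_
    zero_mem' := ?_
    smul_mem' := ?_ }, rfl, ?_⟩
  · rintro a b ⟨Na, hNa⟩ ⟨Nb, hNb⟩
    refine ⟨max Na Nb, fun n hn => ?_⟩
    have h1 : ((a + b : IntD K v E) : K[X]).eval (x n)
        = (a : K[X]).eval (x n) + (b : K[X]).eval (x n) := by
      push_cast; rw [Polynomial.eval_add]
    rw [h1]
    exact lt_of_lt_of_le
      (lt_min (hNa n (le_trans (le_max_left _ _) hn)) (hNb n (le_trans (le_max_right _ _) hn)))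
      (v.map_add _ _)
  · exact ⟨0, fun n _ => by simp [v.map_zero]⟩
  · rintro c f ⟨N, hN⟩
    refine ⟨N, fun n hn => ?_⟩
    have h1 : ((c • f : IntD K v E) : K[X]).eval (x n)
        = (c : K[X]).eval (x n) * (f : K[X]).eval (x n) := by
      rw [smul_eq_mul]; push_cast; rw [Polynomial.eval_mul]
    rw [h1, v.map_mul]
    exact lt_of_lt_of_le (hN n hn)
      (le_add_of_nonneg_left ((memIntD (c : K[X])).mp c.2 (x n) (hxE n)))
  · constructor
    · intro htop
      have h1 : (1 : IntD K v E) ∈ (⊤ : Ideal (IntD K v E)) := trivial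
      rw [← htop] at h1
      obtain ⟨N, hN⟩ := h1
      have := hN N le_rfl
      simp only [OneMemClass.coe_one, Polynomial.eval_one, v.map_one] at this
      exact lt_irrefl _ this
    · intro a b hab
      by_contra hcon
      push_neg at hcon
      obtain ⟨ha, hb⟩ := hcon
      have hane : (a : K[X]) ≠ 0 := by
        intro h
        exact ha ⟨0, fun n _ => by rw [h]; simp [v.map_zero]⟩
      have hbne : (b : K[X]) ≠ 0 := by
        intro h
        exact hb ⟨0, fun n _ => by rw [h]; simp [v.map_zero]⟩
      have hda := (dichotomy v x hpc (a : K[X]) hane).resolve_left ha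
      have hdb := (dichotomy v x hpc (b : K[X]) hbne).resolve_left hb
      obtain ⟨Na, hNa⟩ := hda
      obtain ⟨Nb, hNb⟩ := hdb
      obtain ⟨N, hN⟩ := hab
      set n := max N (max Na Nb) with hndef
      have h1 := hN n (le_max_left _ _)
      have h2 : ((a * b : IntD K v E) : K[X]).eval (x n)
          = (a : K[X]).eval (x n) * (b : K[X]).eval (x n) := by
        push_cast; rw [Polynomial.eval_mul]
      rw [h2, v.map_mul] at h1
      have h3 : v ((a : K[X]).eval (x n)) + v ((b : K[X]).eval (x n)) ≤ 0 :=
        add_nonpos (hNa n (le_trans (le_max_left _ _) (le_max_right _ _)))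
          (hNb n (le_trans (le_max_right _ _) (le_max_right _ _)))
      exact absurd (lt_of_lt_of_le h1 h3) (lt_irrefl _)
end

section
/- Let V be a valuation domain with real-valued valuation v and E ⊆ V admitting a v-ordering {a_n}. For any f ∈ Int(E,V) written as f = Σ_{k=0}^d c_k f_k in the associated basis (f_k(X) = ∏_{j<k}(X − a_j)/(a_k − a_j)), one has inf_{a∈E} v(f(a)) = min_{0≤k≤d} v(c_k) = min_{0≤k≤d} v(f(a_k)). -/
open Polynomial

lemma mem_valRing {K : Type*} [Field K] {v : AddValuation K (WithTop ℝ)} {x : K} :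
    x ∈ valRing K v ↔ 0 ≤ v x := Iff.rfl

lemma mem_IntD {K : Type*} [Field K] {v : AddValuation K (WithTop ℝ)} {E : Set K}
    {f : Polynomial K} : f ∈ IntD K v E ↔ ∀ x ∈ E, 0 ≤ v (f.eval x) := by
  simp [IntD, Subring.mem_iInf, Subring.mem_comap, mem_valRing]

lemma C_mem_IntD {K : Type*} [Field K] {v : AddValuation K (WithTop ℝ)} {E : Set K}
    {y : K} (hy : 0 ≤ v y) : Polynomial.C y ∈ IntD K v E := by
  rw [mem_IntD]; intro x hx; simpa using hy

private noncomputable def bas {K : Type*} [Field K] (a : ℕ → K) (k : ℕ) (x : K) : K :=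
  ∏ j ∈ Finset.range k, ((a k - a j)⁻¹ * (x - a j))

private lemma bas_sub_ne {K : Type*} [Field K] {a : ℕ → K} (hainj : Function.Injective a)
    {j k : ℕ} (h : j < k) : a k - a j ≠ 0 := by
  refine sub_ne_zero_of_ne fun he => ?_
  have := hainj he; omega

private lemma bas_eq_zero {K : Type*} [Field K] (a : ℕ → K) {m k : ℕ} (h : m < k) :
    bas a k (a m) = 0 :=
  Finset.prod_eq_zero (Finset.mem_range.mpr h) (by simp)

private lemma bas_eq_one {K : Type*} [Field K] {a : ℕ → K} (hainj : Function.Injective a)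
    (k : ℕ) : bas a k (a k) = 1 :=
  Finset.prod_eq_one fun j hj => inv_mul_cancel₀ (bas_sub_ne hainj (Finset.mem_range.mp hj))

private lemma bas_nonneg {K : Type*} [Field K] (v : AddValuation K (WithTop ℝ)) {E : Set K}
    {a : ℕ → K} (hainj : Function.Injective a)
    (hvo : ∀ n : ℕ, 1 ≤ n → ∀ x ∈ E,
      v (∏ k ∈ Finset.range n, (a n - a k)) ≤ v (∏ k ∈ Finset.range n, (x - a k)))
    (k : ℕ) {x : K} (hx : x ∈ E) : 0 ≤ v (bas a k x) := by
  rcases Nat.eq_zero_or_pos k with hk | hk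
  · subst hk
    simp [bas, v.map_one]
  · have hD : (∏ j ∈ Finset.range k, (a k - a j)) ≠ 0 :=
      Finset.prod_ne_zero_iff.mpr fun j hj => bas_sub_ne hainj (Finset.mem_range.mp hj)
    have heq : bas a k x = (∏ j ∈ Finset.range k, (a k - a j))⁻¹ *
        ∏ j ∈ Finset.range k, (x - a j) := by
      rw [bas, ← Finset.prod_inv_distrib, ← Finset.prod_mul_distrib]
    have hv1 : v ((∏ j ∈ Finset.range k, (a k - a j))⁻¹) +
        v (∏ j ∈ Finset.range k, (a k - a j)) = 0 := by
      rw [← v.map_mul, inv_mul_cancel₀ hD, v.map_one]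
    calc (0 : WithTop ℝ) = _ := hv1.symm
      _ ≤ v ((∏ j ∈ Finset.range k, (a k - a j))⁻¹) +
          v (∏ j ∈ Finset.range k, (x - a j)) := add_le_add_right (hvo k hk x hx) _
      _ = v (bas a k x) := by rw [heq, v.map_mul]

theorem stmt_15 {K : Type*} [Field K] (v : AddValuation K (WithTop ℝ))
    (E : Set K) (hE : ∀ x ∈ E, 0 ≤ v x)
    -- `{a n}` is a v-ordering of `E` (with pairwise distinct terms)
    (a : ℕ → K) (haE : ∀ n, a n ∈ E) (hainj : Function.Injective a)
    (hvo : ∀ n : ℕ, 1 ≤ n → ∀ x ∈ E,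
      v (∏ k ∈ Finset.range n, (a n - a k)) ≤ v (∏ k ∈ Finset.range n, (x - a k)))
    (d : ℕ) (c : ℕ → K) (hc : ∀ k, k ≤ d → 0 ≤ v (c k))
    (f : Polynomial K) (hfInt : f ∈ IntD K v E)
    -- `f = ∑ c_k f_k` in the basis associated to the v-ordering
    (hf : f = ∑ k ∈ Finset.range (d + 1), Polynomial.C (c k) *
      ∏ j ∈ Finset.range k,
        (Polynomial.C ((a k - a j)⁻¹) * (Polynomial.X - Polynomial.C (a j)))) :
    (Finset.range (d + 1)).inf' Finset.nonempty_range_add_one (fun k => v (c k)) =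
      (Finset.range (d + 1)).inf' Finset.nonempty_range_add_one
        (fun k => v (f.eval (a k))) ∧
    ∀ x ∈ E,
      (Finset.range (d + 1)).inf' Finset.nonempty_range_add_one (fun k => v (c k)) ≤
        v (f.eval x) := by
  have hfe : ∀ x : K, f.eval x = ∑ k ∈ Finset.range (d + 1), c k * bas a k x := by
    intro x
    rw [hf]
    simp [bas, Polynomial.eval_finset_sum, Polynomial.eval_prod]
  have hlow : ∀ x ∈ E,
      (Finset.range (d + 1)).inf' Finset.nonempty_range_add_one (fun k => v (c k)) ≤
        v (f.eval x) := by
    intro x hx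
    rw [hfe x]
    apply v.map_le_sum
    intro k hk
    rw [v.map_mul]
    calc (Finset.range (d + 1)).inf' Finset.nonempty_range_add_one (fun k => v (c k))
        ≤ v (c k) := Finset.inf'_le _ hk
      _ = v (c k) + 0 := (add_zero _).symm
      _ ≤ v (c k) + v (bas a k x) := add_le_add_right (bas_nonneg v hainj hvo k hx) _
  refine ⟨le_antisymm (Finset.le_inf' _ _ fun k hk => hlow (a k) (haE k)) ?_, hlow⟩
  -- reverse inequality via the recursion c_m = f(a_m) - ∑_{k<m} c_k f_k(a_m)
  have hrec : ∀ m, m ≤ d →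
      c m = f.eval (a m) - ∑ k ∈ Finset.range m, c k * bas a k (a m) := by
    intro m hm
    have h1 : f.eval (a m) = ∑ k ∈ Finset.range (m + 1), c k * bas a k (a m) := by
      rw [hfe]
      refine (Finset.sum_subset (Finset.range_subset_range.mpr (by omega)) ?_).symm
      intro k hk hk'
      rw [bas_eq_zero a (by simp at hk'; omega), mul_zero]
    rw [h1, Finset.sum_range_succ, bas_eq_one hainj, mul_one]
    ring
  have hub : ∀ m, m ≤ d →
      (Finset.range (d + 1)).inf' Finset.nonempty_range_add_one (fun k => v (f.eval (a k))) ≤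
        v (c m) := by
    intro m
    induction m using Nat.strong_induction_on with
    | _ m ih =>
      intro hm
      rw [hrec m hm]
      refine le_trans (le_min ?_ ?_) (v.map_sub _ _)
      · exact Finset.inf'_le _ (Finset.mem_range.mpr (by omega))
      · apply v.map_le_sum
        intro k hk
        rw [v.map_mul]
        have hkm : k < m := Finset.mem_range.mp hk
        calc (Finset.range (d + 1)).inf' Finset.nonempty_range_add_one
              (fun k => v (f.eval (a k)))
            ≤ v (c k) := ih k hkm (by omega)
          _ = v (c k) + 0 := (add_zero _).symm
          _ ≤ v (c k) + v (bas a k (a m)) :=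
              add_le_add_right (bas_nonneg v hainj hvo k (haE m)) _
  exact Finset.le_inf' _ _ fun m hm => hub m (by simpa using Nat.lt_succ_iff.mp (Finset.mem_range.mp hm))
end

section
/- Let V be a valuation domain with maximal ideal m and fraction field K, E ⊆ V, and U an ultrafilter on E. Then M_U = {f ∈ Int(E,V) | {x ∈ E : f(x) ∈ m} ∈ U} is a prime ideal of Int(E,V) lying over m. -/
open Polynomial

lemma C_mem_IntER {V K : Type*} [CommRing V] [Field K] [Algebra V K] {E : Set V}
    (y : V) : Polynomial.C (algebraMap V K y) ∈ IntER V K E := by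
  simp only [IntER, Subring.mem_iInf, Subring.mem_comap]
  intro x hx
  exact ⟨y, by simp⟩

lemma exists_val_of_mem_IntER {V K : Type*} [CommRing V] [Field K] [Algebra V K] {E : Set V}
    {f : Polynomial K} (hf : f ∈ IntER V K E) {x : V} (hx : x ∈ E) :
    ∃ a : V, f.eval (algebraMap V K x) = algebraMap V K a := by
  simp only [IntER, Subring.mem_iInf, Subring.mem_comap] at hf
  obtain ⟨a, ha⟩ := hf x hx
  exact ⟨a, ha.symm⟩

lemma algMap_mem_image_iff {V K : Type*} [CommRing V] [Field K] [Algebra V K]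
    [IsFractionRing V K] {I : Ideal V} {y : V} :
    algebraMap V K y ∈ algebraMap V K '' I ↔ y ∈ I := by
  constructor
  · rintro ⟨a, ha, h⟩
    rwa [IsFractionRing.injective V K h] at ha
  · exact fun h => ⟨y, h, rfl⟩

theorem stmt_16 (V : Type*) [CommRing V] [IsDomain V] [ValuationRing V]
    (K : Type*) [Field K] [Algebra V K] [IsFractionRing V K]
    (E : Set V) (U : Ultrafilter E) :
    ∃ I : Ideal (IntER V K E),
      (I : Set (IntER V K E)) =
        {f : IntER V K E |
          {x : E | (f : Polynomial K).eval (algebraMap V K (x : V)) ∈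
            algebraMap V K '' (IsLocalRing.maximalIdeal V)} ∈ U} ∧
      I.IsPrime ∧
      -- `I` lies over the maximal ideal `m` of `V`
      (∀ y : V, (⟨Polynomial.C (algebraMap V K y), C_mem_IntER y⟩ : IntER V K E) ∈ I ↔
        y ∈ IsLocalRing.maximalIdeal V) := by
  set m := IsLocalRing.maximalIdeal V with hm
  refine ⟨{
    carrier := {f : IntER V K E |
      {x : E | (f : Polynomial K).eval (algebraMap V K (x : V)) ∈
        algebraMap V K '' m} ∈ U}
    zero_mem' := by
      apply Filter.univ_mem'
      intro x
      simp only [Set.mem_setOf_eq, Subring.coe_zero, eval_zero]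
      exact ⟨0, m.zero_mem, map_zero _⟩
    add_mem' := by
      intro f g hf hg
      filter_upwards [hf, hg] with x hfx hgx
      obtain ⟨a, ha, ha'⟩ := hfx
      obtain ⟨b, hb, hb'⟩ := hgx
      simp only [Subring.coe_add, eval_add]
      exact ⟨a + b, m.add_mem ha hb, by rw [map_add, ha', hb']⟩
    smul_mem' := by
      intro c f hf
      filter_upwards [hf] with x hfx
      obtain ⟨b, hb, hb'⟩ := hfx
      obtain ⟨a, ha⟩ := exists_val_of_mem_IntER c.2 x.2
      simp only [smul_eq_mul, Subring.coe_mul, eval_mul]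
      exact ⟨a * b, m.mul_mem_left a hb, by rw [map_mul, ha, hb']⟩ }, rfl, ?_, ?_⟩
  · constructor
    · rw [Ideal.ne_top_iff_one]
      intro h1
      simp only [Submodule.mem_mk, AddSubmonoid.mem_mk,
        AddSubsemigroup.mem_mk, Set.mem_setOf_eq, Subring.coe_one, eval_one] at h1
      obtain ⟨x, hx⟩ := Filter.nonempty_of_mem h1
      have : (1 : V) ∈ m := by
        rw [← algMap_mem_image_iff (K := K), map_one]; exact hx
      exact (IsLocalRing.maximalIdeal.isMaximal V).ne_top (Ideal.eq_top_of_isUnit_mem _ this isUnit_one)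
    · intro f g hfg
      simp only [Submodule.mem_mk, AddSubmonoid.mem_mk,
        AddSubsemigroup.mem_mk, Set.mem_setOf_eq] at hfg ⊢
      rw [← Ultrafilter.union_mem_iff]
      refine Filter.mem_of_superset hfg ?_
      intro x hx
      obtain ⟨a, ha⟩ := exists_val_of_mem_IntER f.2 x.2
      obtain ⟨b, hb⟩ := exists_val_of_mem_IntER g.2 x.2
      simp only [Set.mem_setOf_eq, Subring.coe_mul, eval_mul, ha, hb, ← map_mul,
        algMap_mem_image_iff] at hx
      have hprime : m.IsPrime := (IsLocalRing.maximalIdeal.isMaximal V).isPrime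
      rcases hprime.mem_or_mem hx with h | h
      · left; simp only [Set.mem_setOf_eq, ha, algMap_mem_image_iff]; exact h
      · right; simp only [Set.mem_setOf_eq, hb, algMap_mem_image_iff]; exact h
  · intro y
    simp only [Submodule.mem_mk, AddSubmonoid.mem_mk,
      AddSubsemigroup.mem_mk, Set.mem_setOf_eq, eval_C, algMap_mem_image_iff]
    constructor
    · intro h
      obtain ⟨x, hx⟩ := Filter.nonempty_of_mem h
      exact hx
    · intro h
      exact Filter.univ_mem' fun x => h
end

section
/- Let V be a rank-one valuation domain with valuation v, E ⊆ V containing a sequence {x_n} that is pseudo-divergent or pseudo-stationary. Then the closed ball B(x_0, v(x_1 − x_0)) = {y ∈ V | v(y − x_0) ≥ v(x_1 − x_0)} satisfies: every f ∈ Int(E,V) maps B(x_0, v(x_1−x_0)) into V; consequently Int(E,V) ⊆ V[(X − x_0)/(x_1 − x_0)] provided Int(B(0,1),V) = V[X]. -/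
open Polynomial

section Aux


variable {K : Type*} [Field K] (v : AddValuation K (WithTop ℝ)) (x : ℕ → K)

/-- key inequality: any difference `x n - x m` has valuation at most
`min (v (x 1 - x 0)) (v (x 0 - x m))`. -/
lemma key_ineq
    (hseq : (∀ l m n : ℕ, l < m → m < n → v (x n - x m) < v (x m - x l)) ∨
            (∀ l m n : ℕ, l < m → m < n → v (x n - x m) = v (x m - x l)))
    {m n : ℕ} (hmn : m ≠ n) :
    v (x n - x m) ≤ min (v (x 1 - x 0)) (v (x 0 - x m)) := by
  rcases hseq with hd | hs
  · -- pseudo-divergent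
    have hδ1 : ∀ n : ℕ, 2 ≤ n → v (x n - x 1) < v (x 1 - x 0) := fun n hn =>
      hd 0 1 n one_pos hn
    have hgen : ∀ m n : ℕ, 1 ≤ m → m < n → v (x n - x m) = v (x n - x 1) := by
      intro m n hm hmn
      rcases eq_or_lt_of_le hm with h1 | h2
      · rw [← h1]
      · have h := hd 1 m n h2 hmn
        have : x n - x 1 = (x n - x m) + (x m - x 1) := by ring
        rw [this, v.map_add_eq_of_lt_left h]
    have h0 : ∀ n : ℕ, 2 ≤ n → v (x n - x 0) = v (x n - x 1) := by
      intro n hn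
      have : x n - x 0 = (x n - x 1) + (x 1 - x 0) := by ring
      rw [this, v.map_add_eq_of_lt_left (hδ1 n hn)]
    have vfull : ∀ m n : ℕ, m < n → 2 ≤ n → v (x n - x m) = v (x n - x 1) := by
      intro m n hmn hn
      rcases Nat.eq_zero_or_pos m with rfl | hm
      · exact h0 n hn
      · exact hgen m n hm hmn
    rcases lt_or_gt_of_ne hmn with h | h
    · -- m < n
      rcases Nat.lt_or_ge n 2 with hn | hn
      · -- n = 1, m = 0
        interval_cases n
        · omega
        · interval_cases m
          simp [sub_self, v.map_zero]
      · rw [vfull m n h hn]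
        refine le_min (hδ1 n hn).le ?_
        rcases Nat.eq_zero_or_pos m with rfl | hm1
        · simp [sub_self, v.map_zero]
        rcases eq_or_lt_of_le (show 1 ≤ m from hm1) with h1 | hm2
        · rw [← h1, v.map_sub_swap (x 0) (x 1)]
          exact (hδ1 n hn).le
        · have hm2' : 2 ≤ m := hm2
          rw [v.map_sub_swap (x 0) (x m), h0 m hm2']
          have := hd 1 m n hm2 h
          rw [hgen m n hm1 h] at this
          exact this.le
    · -- n < m
      rcases Nat.lt_or_ge m 2 with hm | hm
      · -- m = 1, n = 0
        interval_cases m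
        · omega
        · interval_cases n
          rw [v.map_sub_swap]
          exact le_min le_rfl le_rfl
      · rw [v.map_sub_swap, vfull n m h hm, v.map_sub_swap (x 0) (x m), h0 m hm]
        exact le_min (hδ1 m hm).le le_rfl
  · -- pseudo-stationary
    have S1 : ∀ n : ℕ, 2 ≤ n → v (x n - x 1) = v (x 1 - x 0) := fun n hn =>
      hs 0 1 n one_pos hn
    have S0 : ∀ n : ℕ, 2 ≤ n → v (x n - x 0) = v (x 1 - x 0) := by
      intro n hn
      have h1 := hs 0 n (n + 1) (by omega) (by omega)
      have h2 := hs 1 n (n + 1) (by omega) (by omega)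
      rw [← h1, h2, S1 n hn]
    have S : ∀ m n : ℕ, m < n → v (x n - x m) = v (x 1 - x 0) := by
      intro m n hmn
      rcases Nat.lt_or_ge n 2 with hn | hn
      · interval_cases n
        · omega
        · interval_cases m
          rfl
      · rcases Nat.eq_zero_or_pos m with rfl | hm1
        · exact S0 n hn
        rcases eq_or_lt_of_le (show 1 ≤ m from hm1) with h1 | hm2
        · rw [← h1]; exact S1 n hn
        · rw [hs 0 m n hm1 hmn, S0 m hm2]
    have hmin : v (x 1 - x 0) ≤ v (x 0 - x m) := by
      rcases Nat.eq_zero_or_pos m with rfl | hm1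
      · simp [sub_self, v.map_zero]
      · rw [v.map_sub_swap (x 0) (x m), S 0 m hm1]
    rcases lt_or_gt_of_ne hmn with h | h
    · rw [S m n h]; exact le_min le_rfl hmin
    · rw [v.map_sub_swap, S n m h]; exact le_min le_rfl hmin

end Aux

section Main

variable {K : Type*} [Field K] {v : AddValuation K (WithTop ℝ)} {E : Set K}

lemma ball_lemma (v : AddValuation K (WithTop ℝ)) (x : ℕ → K)
    (hseq : (∀ l m n : ℕ, l < m → m < n → v (x n - x m) < v (x m - x l)) ∨
            (∀ l m n : ℕ, l < m → m < n → v (x n - x m) = v (x m - x l)))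
    {y : K} (hy : v (x 1 - x 0) ≤ v (y - x 0)) {m n : ℕ} (hmn : m ≠ n) :
    v (x n - x m) ≤ v (y - x m) := by
  refine (key_ineq v x hseq hmn).trans ?_
  have h1 : min (v (x 1 - x 0)) (v (x 0 - x m)) ≤ min (v (y - x 0)) (v (x 0 - x m)) :=
    min_le_min hy le_rfl
  refine h1.trans ?_
  have := v.map_add (y - x 0) (x 0 - x m)
  rwa [sub_add_sub_cancel] at this

end Main

theorem stmt_17 {K : Type*} [Field K] (v : AddValuation K (WithTop ℝ))
    (E : Set K) (hE : ∀ x ∈ E, 0 ≤ v x)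
    (x : ℕ → K) (hxE : ∀ n, x n ∈ E)
    -- the sequence is pseudo-divergent or pseudo-stationary
    (hseq : (∀ l m n : ℕ, l < m → m < n → v (x n - x m) < v (x m - x l)) ∨
            (∀ l m n : ℕ, l < m → m < n → v (x n - x m) = v (x m - x l))) :
    -- every `f ∈ Int(E,V)` maps the ball `B(x₀, v(x₁ - x₀))` into `V`
    (∀ f ∈ IntD K v E, ∀ y : K, 0 ≤ v y → v (x 1 - x 0) ≤ v (y - x 0) →
      0 ≤ v (f.eval y)) ∧
    -- consequently, `Int(E,V) ⊆ V[(X - x₀)/(x₁ - x₀)]` provided `Int(B(0,1),V) = V[X]`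
    (x 1 ≠ x 0 →
      (∀ f : Polynomial K,
        (∀ y : K, 0 ≤ v y → 0 ≤ v (f.eval y)) ↔ (∀ i : ℕ, 0 ≤ v (f.coeff i))) →
      ∀ f ∈ IntD K v E, ∃ g : Polynomial K, (∀ i : ℕ, 0 ≤ v (g.coeff i)) ∧
        f = g.comp (Polynomial.C (x 1 - x 0)⁻¹ * (Polynomial.X - Polynomial.C (x 0)))) := by

  by_cases h01 : x 1 = x 0
  · refine ⟨?_, fun h => absurd h01 h⟩
    intro f hf y _ hball
    have htop : v (x 1 - x 0) = ⊤ := by rw [h01, sub_self, v.map_zero]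
    have : v (y - x 0) = ⊤ := top_le_iff.mp (htop ▸ hball)
    have hy0 : y = x 0 := sub_eq_zero.mp (v.top_iff.mp this)
    rw [hy0]
    exact mem_IntD.mp hf _ (hxE 0)
  -- main case : x 1 ≠ x 0
  have hγtop : v (x 1 - x 0) ≠ ⊤ := v.ne_top_iff.mpr (sub_ne_zero.mpr h01)
  have hinj : ∀ m n : ℕ, m ≠ n → x n ≠ x m := by
    intro m n hmn heq
    have := key_ineq v x hseq hmn
    rw [heq, sub_self, v.map_zero] at this
    exact hγtop (top_le_iff.mp ((le_min_iff.mp this).1))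
  have main : ∀ f ∈ IntD K v E, ∀ y : K, 0 ≤ v y → v (x 1 - x 0) ≤ v (y - x 0) →
      0 ≤ v (f.eval y) := by
    intro f hf y _ hball
    set s : Finset ℕ := Finset.range (f.natDegree + 1) with hs
    have hvs : Set.InjOn x s := by
      intro a _ b _ hab
      by_contra hne
      exact hinj a b hne hab.symm
    have hdeg : f.degree < s.card := by
      rw [hs, Finset.card_range]
      exact lt_of_le_of_lt f.degree_le_natDegree
        (by exact_mod_cast Nat.lt_succ_self f.natDegree)
    have hfi := Lagrange.eq_interpolate hvs hdeg
    rw [hfi, Lagrange.interpolate_apply, Polynomial.eval_finset_sum]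
    apply v.map_le_sum
    intro i hi
    rw [Polynomial.eval_mul, Polynomial.eval_C, v.map_mul]
    refine add_nonneg (mem_IntD.mp hf _ (hxE i)) ?_
    unfold Lagrange.basis
    rw [Polynomial.eval_prod]
    refine Finset.prod_induction _ (fun z => 0 ≤ v z)
      (fun a b ha hb => by show 0 ≤ v (a * b); rw [v.map_mul]; exact add_nonneg ha hb)
      (by show 0 ≤ v (1 : K); rw [v.map_one]) ?_
    intro j hj
    show 0 ≤ v (Polynomial.eval y (Lagrange.basisDivisor (x i) (x j)))
    have hji : j ≠ i := (Finset.mem_erase.mp hj).1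
    have hne : x i - x j ≠ 0 := sub_ne_zero.mpr (hinj j i hji)
    have hle : v (x i - x j) ≤ v (y - x j) := ball_lemma v x hseq hball hji
    unfold Lagrange.basisDivisor
    rw [Polynomial.eval_mul, Polynomial.eval_C, Polynomial.eval_sub, Polynomial.eval_X,
      Polynomial.eval_C]
    calc (0 : WithTop ℝ) = v ((x i - x j)⁻¹ * (x i - x j)) := by
          rw [inv_mul_cancel₀ hne, v.map_one]
      _ = v (x i - x j)⁻¹ + v (x i - x j) := v.map_mul _ _
      _ ≤ v (x i - x j)⁻¹ + v (y - x j) := add_le_add_right hle _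
      _ = v ((x i - x j)⁻¹ * (y - x j)) := (v.map_mul _ _).symm
  refine ⟨main, ?_⟩
  intro _ hInt f hf
  set c : K := x 1 - x 0 with hc
  have hcne : c ≠ 0 := sub_ne_zero.mpr h01
  have hγ0 : 0 ≤ v c := by
    refine le_trans (le_min (hE _ (hxE 1)) (hE _ (hxE 0))) (v.map_sub _ _)
  refine ⟨f.comp (Polynomial.C c * Polynomial.X + Polynomial.C (x 0)), ?_, ?_⟩
  · rw [← hInt]
    intro y hy
    rw [Polynomial.eval_comp, Polynomial.eval_add, Polynomial.eval_mul, Polynomial.eval_C,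
      Polynomial.eval_X, Polynomial.eval_C]
    have h1 : 0 ≤ v (c * y) := by rw [v.map_mul]; exact add_nonneg hγ0 hy
    have h2 : 0 ≤ v (c * y + x 0) :=
      le_trans (le_min h1 (hE _ (hxE 0))) (v.map_add _ _)
    have h3 : v c ≤ v (c * y + x 0 - x 0) := by
      rw [add_sub_cancel_right, v.map_mul]
      calc v c = v c + 0 := (add_zero _).symm
        _ ≤ v c + v y := add_le_add_right hy _
    exact main f hf _ h2 h3
  · rw [Polynomial.comp_assoc]
    have : (Polynomial.C c * Polynomial.X + Polynomial.C (x 0)).comp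
        (Polynomial.C c⁻¹ * (Polynomial.X - Polynomial.C (x 0))) = Polynomial.X := by
      rw [Polynomial.add_comp, Polynomial.mul_comp, Polynomial.C_comp, Polynomial.X_comp,
        Polynomial.C_comp, ← mul_assoc, ← Polynomial.C_mul, mul_inv_cancel₀ hcne,
        Polynomial.C_1, one_mul, sub_add_cancel]
    rw [this, Polynomial.comp_X]
end

section
/- Let V be a valuation domain with fraction field K such that Int(V) = V[X] (e.g., when the valuation is not discrete or the residue field is infinite). Then for any a ∈ V and any nonzero t ∈ V, Int(B(a, v(t)), V) = V[(X − a)/t], where B(a, v(t)) = {y ∈ V | v(y − a) ≥ v(t)} = a + tV. -/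
open Polynomial

theorem stmt_18 (V : Type*) [CommRing V] [IsDomain V] [ValuationRing V]
    (K : Type*) [Field K] [Algebra V K] [IsFractionRing V K]
    -- `Int(V) = V[X]`
    (hIntV : ∀ f : Polynomial K,
      (∀ y : V, f.eval (algebraMap V K y) ∈ (algebraMap V K).range) ↔
        ∃ g : Polynomial V, f = g.map (algebraMap V K))
    (a t : V) (ht : t ≠ 0) :
    -- `Int(B(a, v(t)), V) = V[(X - a)/t]`, where `B(a, v(t)) = a + tV`
    ∀ f : Polynomial K,
      (∀ y : V, (∃ z : V, y = a + t * z) → f.eval (algebraMap V K y) ∈ (algebraMap V K).range) ↔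
        ∃ g : Polynomial V, f = (g.map (algebraMap V K)).comp
          (Polynomial.C ((algebraMap V K t)⁻¹) *
            (Polynomial.X - Polynomial.C (algebraMap V K a))) := by
  intro f
  set φ := algebraMap V K with hφ
  have hφt : φ t ≠ 0 := by
    simpa using (map_ne_zero_iff φ (IsFractionRing.injective V K)).mpr ht
  set w : Polynomial K := Polynomial.C ((φ t)⁻¹) * (Polynomial.X - Polynomial.C (φ a)) with hw
  set u : Polynomial K := Polynomial.C (φ a) + Polynomial.C (φ t) * Polynomial.X with hu
  have huw : u.comp w = Polynomial.X := by
    simp only [hu, hw, add_comp, C_comp, mul_comp, X_comp]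
    rw [← mul_assoc, ← C_mul, mul_inv_cancel₀ hφt, C_1, one_mul]
    ring
  constructor
  · intro h
    have hF : ∀ y : V, (f.comp u).eval (φ y) ∈ φ.range := by
      intro y
      rw [eval_comp]
      have : u.eval (φ y) = φ (a + t * y) := by
        simp [hu, map_add, map_mul]
      rw [this]
      exact h _ ⟨y, rfl⟩
    obtain ⟨g, hg⟩ := (hIntV (f.comp u)).mp hF
    refine ⟨g, ?_⟩
    rw [← hg, Polynomial.comp_assoc, huw, comp_X]
  · rintro ⟨g, rfl⟩ y ⟨z, rfl⟩
    rw [eval_comp]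
    have hwe : w.eval (φ (a + t * z)) = φ z := by
      simp only [hw, eval_mul, eval_C, eval_sub, eval_X, map_add, map_mul]
      field_simp
      ring
    rw [hwe, Polynomial.eval_map, Polynomial.eval₂_hom]
    exact ⟨g.eval z, rfl⟩
end

section
/- Let V be a rank-one valuation domain with valuation v, {x_n} a pseudo-convergent sequence in E ⊆ V with pseudo-limit x ∈ V, and suppose every f ∈ Int(E,V) satisfies f(x) ∈ V (x is in the polynomial closure of E). Then the maximal ideals m_x = {f ∈ Int(E,V) | v(f(x)) > 0} and m_{{x_n}} = {f ∈ Int(E,V) | f(x_n) ∈ m for almost all n} satisfy m_{{x_n}} ⊆ m_x. -/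
open Polynomial

lemma coe_nsmul_withTop (r : ℝ) (n : ℕ) :
    (n • (r : WithTop ℝ)) = ((n • r : ℝ) : WithTop ℝ) := by
  induction n with
  | zero => simp
  | succ k ih => rw [succ_nsmul, succ_nsmul, ih]; push_cast; ring_nf

lemma sum_val_eq_min {K : Type*} [Field K] (v : AddValuation K (WithTop ℝ)) {s : Finset ℕ}
    {t : ℕ → K} {i0 : ℕ} (hi0 : i0 ∈ s) (hmin : ∀ j ∈ s, j ≠ i0 → v (t i0) < v (t j)) :
    v (∑ i ∈ s, t i) = v (t i0) := by
  classical
  rw [← Finset.add_sum_erase s t hi0]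
  rcases eq_or_lt_of_le (le_top : v (t i0) ≤ ⊤) with htop | hlt
  · have he : s.erase i0 = ∅ := by
      apply Finset.eq_empty_of_forall_notMem
      intro j hj
      have h1 := hmin j (Finset.mem_of_mem_erase hj) (Finset.ne_of_mem_erase hj)
      rw [htop] at h1
      exact not_top_lt h1
    rw [he]; simp
  · have hrest : v (t i0) < v (∑ i ∈ s.erase i0, t i) :=
      v.map_lt_sum' hlt
        (fun j hj => hmin j (Finset.mem_of_mem_erase hj) (Finset.ne_of_mem_erase hj))
    exact v.map_add_eq_of_lt_left hrest

lemma key_lemma {K : Type*} [Field K] (v : AddValuation K (WithTop ℝ)) (x : ℕ → K) (xl : K)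
    (hlim : StrictMono fun n => v (xl - x n)) (h : Polynomial K) (hroot : h.eval xl = 0)
    (N : ℕ) (hz : ∀ n : ℕ, N ≤ n → v (h.eval (x n)) = 0) : False := by
  classical
  -- the values v (xl - x n) are finite
  have hne : ∀ n, v (xl - x n) ≠ ⊤ := fun n => (hlim (Nat.lt_succ_self n)).ne_top
  set g : ℕ → ℝ := fun n => (v (xl - x n)).untop (hne n) with hgdef
  have hgc : ∀ n, (g n : WithTop ℝ) = v (xl - x n) := fun n => WithTop.coe_untop _ _
  have hgsm : StrictMono g := by
    intro a b hab
    have h1 : (g a : WithTop ℝ) < (g b : WithTop ℝ) := by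
      rw [hgc a, hgc b]; exact hlim hab
    exact_mod_cast h1
  set H := h.comp (Polynomial.X + Polynomial.C xl) with hHdef
  have heval : ∀ n, H.eval (x n - xl) = h.eval (x n) := by
    intro n
    simp [hHdef, Polynomial.eval_comp, sub_add_cancel]
  have hc0 : H.coeff 0 = 0 := by
    rw [Polynomial.coeff_zero_eq_eval_zero]
    simp [hHdef, Polynomial.eval_comp, hroot]
  have h0nsupp : (0 : ℕ) ∉ H.support := by
    simp [Polynomial.mem_support_iff, hc0]
  have hHne : H.support.Nonempty := by
    rw [Finset.nonempty_iff_ne_empty]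
    intro hcon
    have hH0 : H = 0 := Polynomial.support_eq_empty.mp hcon
    have := hz N le_rfl
    rw [← heval N, hH0] at this
    simp at this
  set c : ℕ → ℝ := fun i => WithTop.untopD 0 (v (H.coeff i)) with hcdef
  have hcc : ∀ i ∈ H.support, (c i : WithTop ℝ) = v (H.coeff i) := by
    intro i hi
    have h1 : H.coeff i ≠ 0 := Polynomial.mem_support_iff.mp hi
    have h2 : v (H.coeff i) ≠ ⊤ := v.ne_top_iff.mpr h1
    obtain ⟨r, hr⟩ := WithTop.ne_top_iff_exists.mp h2
    rw [hcdef]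
    have h3 : WithTop.untopD 0 (v (H.coeff i)) = r :=
      WithTop.untopD_eq_iff.mpr (Or.inl hr.symm)
    simp [h3, ← hr]
  -- valuation of each term
  have hterm : ∀ (n : ℕ), ∀ i ∈ H.support,
      v (H.coeff i * (x n - xl) ^ i) = ((c i + i * g n : ℝ) : WithTop ℝ) := by
    intro n i hi
    rw [v.map_mul, v.map_pow, ← hcc i hi, v.map_sub_swap, ← hgc n, coe_nsmul_withTop]
    rw [← WithTop.coe_add]
    norm_num [nsmul_eq_mul]
  have hsum : ∀ n, h.eval (x n) = ∑ i ∈ H.support, H.coeff i * (x n - xl) ^ i := by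
    intro n
    rw [← heval n, Polynomial.eval_eq_sum, Polynomial.sum_def]
  -- the finite set of "crossing" values
  set B : Finset ℝ :=
    (H.support ×ˢ H.support).image
      (fun p : ℕ × ℕ => (c p.1 - c p.2) / ((p.2 : ℝ) - (p.1 : ℝ))) with hBdef
  -- main claim at "good" indices
  have main : ∀ n : ℕ, N ≤ n → g n ∉ B →
      (∃ i ∈ H.support, c i + i * g n = 0) ∧ (∀ j ∈ H.support, 0 ≤ c j + j * g n) := by
    intro n hn hgood
    obtain ⟨i0, hi0mem, hi0min⟩ :=
      Finset.exists_min_image H.support (fun i => c i + i * g n) hHne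
    have hdist : ∀ j ∈ H.support, j ≠ i0 → c i0 + i0 * g n < c j + j * g n := by
      intro j hj hji
      refine lt_of_le_of_ne (hi0min j hj) ?_
      intro heq
      apply hgood
      rw [hBdef]
      apply Finset.mem_image.mpr
      refine ⟨(i0, j), Finset.mem_product.mpr ⟨hi0mem, hj⟩, ?_⟩
      have hij : (j : ℝ) - (i0 : ℝ) ≠ 0 := by
        intro hc
        have hji' : j = i0 := by exact_mod_cast sub_eq_zero.mp hc
        exact hji hji'
      field_simp
      linarith [heq]
    have hveq : v (h.eval (x n)) = ((c i0 + i0 * g n : ℝ) : WithTop ℝ) := by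
      rw [hsum n, sum_val_eq_min v hi0mem ?_, hterm n i0 hi0mem]
      intro j hj hji
      rw [hterm n i0 hi0mem, hterm n j hj]
      exact_mod_cast hdist j hj hji
    have h0 : ((c i0 + i0 * g n : ℝ) : WithTop ℝ) = ((0 : ℝ) : WithTop ℝ) := by
      rw [← hveq, hz n hn]; simp
    have h0' : c i0 + i0 * g n = 0 := by exact_mod_cast h0
    refine ⟨⟨i0, hi0mem, h0'⟩, fun j hj => ?_⟩
    rw [← h0']
    exact hi0min j hj
  -- choose two good indices
  have hbadfin : {n : ℕ | g n ∈ B}.Finite := by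
    have : {n : ℕ | g n ∈ B} = g ⁻¹' (B : Set ℝ) := rfl
    rw [this]
    exact Set.Finite.preimage (hgsm.injective.injOn) B.finite_toSet
  have hinf : {n : ℕ | g n ∈ B}ᶜ.Infinite := hbadfin.infinite_compl
  obtain ⟨n, hn, hNn⟩ := hinf.exists_gt N
  obtain ⟨m, hm, hnm⟩ := hinf.exists_gt n
  have hn' : g n ∉ B := hn
  have hm' : g m ∉ B := hm
  obtain ⟨⟨i, hisup, hie⟩, -⟩ := main m (le_of_lt (hNn.trans hnm)) hm'
  obtain ⟨-, hlow⟩ := main n hNn.le hn'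
  have hipos : 0 < (i : ℝ) := by
    have : i ≠ 0 := fun hc => h0nsupp (hc ▸ hisup)
    exact_mod_cast Nat.pos_of_ne_zero this
  have hgnm : g n < g m := hgsm hnm
  have h1 : c i + i * g n < c i + i * g m := by nlinarith
  have h2 := hlow i hisup
  rw [hie] at h1
  linarith

theorem stmt_19 {K : Type*} [Field K] (v : AddValuation K (WithTop ℝ))
    (E : Set K) (hE : ∀ x ∈ E, 0 ≤ v x)
    -- `{x n}` is a pseudo-convergent sequence in `E`
    (x : ℕ → K) (hxE : ∀ n, x n ∈ E)
    (hpc : ∀ l m n : ℕ, l < m → m < n → v (x m - x l) < v (x n - x m))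
    -- with pseudo-limit `xl ∈ V`
    (xl : K) (hxlV : 0 ≤ v xl)
    (hlim : StrictMono fun n => v (xl - x n))
    -- `xl` is in the polynomial closure of `E`
    (hclo : ∀ f : Polynomial K, f ∈ IntD K v E → 0 ≤ v (f.eval xl)) :
    -- `m_{{x n}} ⊆ m_xl`
    ∀ f ∈ IntD K v E,
      (∃ N : ℕ, ∀ n : ℕ, N ≤ n → 0 < v (f.eval (x n))) → 0 < v (f.eval xl) := by
  intro f hf hev
  obtain ⟨N, hN⟩ := hev
  by_contra hpos
  have h0 : v (f.eval xl) = 0 := le_antisymm (not_lt.mp hpos) (hclo f hf)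
  set a := f.eval xl with ha
  refine key_lemma v x xl hlim (f - Polynomial.C a) ?_ N ?_
  · simp [ha]
  intro n hn
  have h1 : v a < v (f.eval (x n)) := by rw [h0]; exact hN n hn
  rw [Polynomial.eval_sub, Polynomial.eval_C, v.map_sub_eq_of_lt_right h1, h0]
end
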